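/- arXiv:0711.3871 — 6 statements merged into one kernel-verified Lean document; each statement's English description precedes it below -/
import Mathlib

section
/- Let F be a cubic 2-connected graph and let G = F^Δ be the graph obtained from F by replacing each vertex of F by a triangle. Then for every 3-vertex path L in G, the graph G − L (obtained from G by deleting the three vertices of L and all incident edges) has a Λ-factor. -/
open SimpleGraph

/-- `P` is a `Λ`-factor of the graph `G`: a collection of ordered triples, each of
which is a 3-vertex path of `G` (the first and third entries being the endpoints),
such that every vertex of `G` lies in exactly one triple. -/
def IsLambdaFactor {V : Type*} (G : SimpleGraph V) (P : Set (V × V × V)) : Prop :=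
  (∀ p ∈ P, G.Adj p.1 p.2.1 ∧ G.Adj p.2.1 p.2.2 ∧ p.1 ≠ p.2.2) ∧
  ∀ v : V, ∃! p : V × V × V, p ∈ P ∧ (v = p.1 ∨ v = p.2.1 ∨ v = p.2.2)

/-- `G` has a `Λ`-factor: a spanning collection of pairwise disjoint 3-vertex paths. -/
def HasLambdaFactor {V : Type*} (G : SimpleGraph V) : Prop :=
  ∃ P, IsLambdaFactor G P

/-- `G` is claw-free: it has no induced subgraph isomorphic to `K_{1,3}`. -/
def ClawFree {V : Type*} (G : SimpleGraph V) : Prop :=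
  ∀ x a b c : V, G.Adj x a → G.Adj x b → G.Adj x c →
    a ≠ b → a ≠ c → b ≠ c →
    ¬ G.Adj a b → ¬ G.Adj a c → ¬ G.Adj b c → False

/-- `G` is `k`-connected: it has more than `k` vertices and removing any fewer than
`k` vertices leaves it connected. -/
def KConnected {V : Type*} (k : ℕ) (G : SimpleGraph V) : Prop :=
  k < Nat.card V ∧ ∀ S : Set V, S.ncard < k → (G.induce Sᶜ).Connected

/-- `G` is cubic: every vertex has degree 3. -/
def CubicGraph {V : Type*} (G : SimpleGraph V) : Prop :=
  ∀ v : V, (G.neighborSet v).ncard = 3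

/-- The graph `F^Δ` obtained from `F` by replacing every vertex by a triangle.
Its vertices are the darts of `F`; two darts are adjacent iff they have the same
tail (the triangle edges) or are reverses of each other (the original edges). -/
def TriangleReplacement {V : Type*} (F : SimpleGraph V) : SimpleGraph F.Dart where
  Adj d d' := d ≠ d' ∧ (d.toProd.1 = d'.toProd.1 ∨ d' = d.symm)
  symm := ⟨by
    rintro d d' ⟨hne, h | h⟩
    · exact ⟨hne.symm, Or.inl h.symm⟩
    · subst h
      exact ⟨hne.symm, Or.inr (SimpleGraph.Dart.symm_symm d).symm⟩⟩
  loopless := ⟨fun d h => h.1 rfl⟩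

namespace LambdaAux

variable {V : Type*} {F : SimpleGraph V}

/-- membership of an element in a triple -/
def Mem3 {W : Type*} (d : W) (p : W × W × W) : Prop := d = p.1 ∨ d = p.2.1 ∨ d = p.2.2

@[simp] lemma dart_symm_fst (d : F.Dart) : (d.symm).fst = d.snd := rfl
@[simp] lemma dart_symm_snd (d : F.Dart) : (d.symm).snd = d.fst := rfl

lemma dart_eq_iff (d d' : F.Dart) : d = d' ↔ d.fst = d'.fst ∧ d.snd = d'.snd := by
  rw [Dart.ext_iff, Prod.ext_iff]

lemma exists_tri (hcubic : CubicGraph F) (v : V) :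
    ∃ t : F.Dart × F.Dart × F.Dart,
      t.1.fst = v ∧ t.2.1.fst = v ∧ t.2.2.fst = v ∧
      t.1 ≠ t.2.1 ∧ t.1 ≠ t.2.2 ∧ t.2.1 ≠ t.2.2 ∧
      ∀ d : F.Dart, d.fst = v → Mem3 d t := by
  obtain ⟨n1, n2, n3, h12, h13, h23, hset⟩ := Set.ncard_eq_three.mp (hcubic v)
  have h1 : F.Adj v n1 := by rw [← F.mem_neighborSet, hset]; simp
  have h2 : F.Adj v n2 := by rw [← F.mem_neighborSet, hset]; simp
  have h3 : F.Adj v n3 := by rw [← F.mem_neighborSet, hset]; simp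
  refine ⟨⟨⟨(v,n1),h1⟩, ⟨(v,n2),h2⟩, ⟨(v,n3),h3⟩⟩, rfl, rfl, rfl, ?_, ?_, ?_, ?_⟩
  · simp [dart_eq_iff, h12]
  · simp [dart_eq_iff, h13]
  · simp [dart_eq_iff, h23]
  · intro d hd
    have hmem : d.snd ∈ F.neighborSet v := by rw [mem_neighborSet]; exact hd ▸ d.adj
    rw [hset] at hmem
    rcases hmem with h | h | h
    · exact Or.inl (by simp [dart_eq_iff, hd, h])
    · exact Or.inr (Or.inl (by simp [dart_eq_iff, hd, h]))
    · exact Or.inr (Or.inr (by simp [dart_eq_iff, hd, Set.mem_singleton_iff.mp h]))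

noncomputable def tri (hcubic : CubicGraph F) (v : V) : F.Dart × F.Dart × F.Dart :=
  (exists_tri hcubic v).choose

lemma tri_spec (hcubic : CubicGraph F) (v : V) :
    (tri hcubic v).1.fst = v ∧ (tri hcubic v).2.1.fst = v ∧ (tri hcubic v).2.2.fst = v ∧
      (tri hcubic v).1 ≠ (tri hcubic v).2.1 ∧ (tri hcubic v).1 ≠ (tri hcubic v).2.2 ∧
      (tri hcubic v).2.1 ≠ (tri hcubic v).2.2 ∧
      ∀ d : F.Dart, d.fst = v → Mem3 d (tri hcubic v) :=
  (exists_tri hcubic v).choose_spec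

lemma tri_mem_fst (hcubic : CubicGraph F) {v : V} {d : F.Dart} (h : Mem3 d (tri hcubic v)) :
    d.fst = v := by
  obtain ⟨e1, e2, e3, _⟩ := tri_spec hcubic v
  rcases h with h | h | h <;> rw [h] <;> assumption

lemma cover3 (hcubic : CubicGraph F) {v : V} {d1 d2 d3 : F.Dart}
    (h1 : d1.fst = v) (h2 : d2.fst = v) (h3 : d3.fst = v)
    (h12 : d1 ≠ d2) (h13 : d1 ≠ d3) (h23 : d2 ≠ d3) :
    ∀ d : F.Dart, d.fst = v → d = d1 ∨ d = d2 ∨ d = d3 := by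
  obtain ⟨e1, e2, e3, n12, n13, n23, cov⟩ := tri_spec hcubic v
  intro d hd
  have c1 := cov d1 h1
  have c2 := cov d2 h2
  have c3 := cov d3 h3
  have c4 := cov d hd
  unfold Mem3 at c1 c2 c3 c4
  rcases c1 with c1 | c1 | c1 <;> rcases c2 with c2 | c2 | c2 <;>
    rcases c3 with c3 | c3 | c3 <;> rcases c4 with c4 | c4 | c4 <;>
    simp_all

lemma exists_third (hcubic : CubicGraph F) {v : V} {d1 d2 : F.Dart}
    (h1 : d1.fst = v) (h2 : d2.fst = v) (hne : d1 ≠ d2) :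
    ∃ e : F.Dart, e.fst = v ∧ e ≠ d1 ∧ e ≠ d2 := by
  obtain ⟨e1, e2, e3, n12, n13, n23, cov⟩ := tri_spec hcubic v
  have c1 := cov d1 h1
  have c2 := cov d2 h2
  unfold Mem3 at c1 c2
  rcases c1 with c1 | c1 | c1 <;> rcases c2 with c2 | c2 | c2 <;> subst c1 <;> subst c2 <;>
    first
      | exact absurd rfl hne
      | exact ⟨_, e3, n13.symm, n23.symm⟩
      | exact ⟨_, e2, n12.symm, n23⟩
      | exact ⟨_, e3, n23.symm, n13.symm⟩
      | exact ⟨_, e1, n12, n13⟩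
      | exact ⟨_, e2, n23, n12.symm⟩
      | exact ⟨_, e1, n13, n12⟩

open Classical in
noncomputable def third (hcubic : CubicGraph F) (d1 d2 : F.Dart) : F.Dart :=
  if h : d1.fst = d2.fst ∧ d1 ≠ d2 then (exists_third hcubic rfl h.1.symm h.2).choose else d1

lemma third_spec (hcubic : CubicGraph F) {d1 d2 : F.Dart}
    (h : d1.fst = d2.fst) (hne : d1 ≠ d2) :
    (third hcubic d1 d2).fst = d1.fst ∧ third hcubic d1 d2 ≠ d1 ∧ third hcubic d1 d2 ≠ d2 := by
  unfold third
  rw [dif_pos ⟨h, hne⟩]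
  exact (exists_third hcubic rfl h.symm hne).choose_spec

lemma adj_same_tail {d d' : F.Dart} (h : d.fst = d'.fst) (hne : d ≠ d') :
    (TriangleReplacement F).Adj d d' := ⟨hne, Or.inl h⟩

lemma adj_symm_dart (d : F.Dart) : (TriangleReplacement F).Adj d d.symm :=
  ⟨(Dart.symm_ne d).symm, Or.inr rfl⟩


/-- The set of darts covered by the chain construction along a walk. -/
def chainSet (cw y : F.Dart) {v w : V} (q : F.Walk v w) : Set F.Dart :=
  ({d : F.Dart | d.fst ∈ q.support} \ {cw}) ∪ {y}

lemma chain (hcubic : CubicGraph F) (cw : F.Dart) :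
    ∀ {v w : V} (q : F.Walk v w) (y : F.Dart), cw.fst = w → q.support.Nodup →
      cw.snd ∉ q.support → y.snd = v → y.fst ∉ q.support → y.symm ≠ cw →
      ∃ T : Set (F.Dart × F.Dart × F.Dart),
        (∀ p ∈ T, (TriangleReplacement F).Adj p.1 p.2.1 ∧
          (TriangleReplacement F).Adj p.2.1 p.2.2 ∧ p.1 ≠ p.2.2) ∧
        (∀ p ∈ T, ∀ d, Mem3 d p → d ∈ chainSet cw y q) ∧
        (∀ d ∈ chainSet cw y q, ∃! p, p ∈ T ∧ Mem3 d p) := by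
  intro v w q
  induction q with
  | nil =>
    rename_i v
    intro y hcwf hnd hcws hys hyf hycw
    simp only [Walk.support_nil, List.mem_singleton] at hcws hyf
    have htails : y.symm.fst = cw.fst := by
      rw [dart_symm_fst, hys, hcwf]
    have hzs := third_spec hcubic htails hycw
    set z := third hcubic y.symm cw with hz
    have hzfst : z.fst = v := by rw [hzs.1, dart_symm_fst, hys]
    have hyfv : y.fst ≠ v := hyf
    have hyz : y ≠ z := fun h => hyfv (h ▸ hzfst)
    have hyy : y ≠ y.symm := (Dart.symm_ne y).symm
    refine ⟨{(y, y.symm, z)}, ?_, ?_, ?_⟩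
    · rintro p rfl
      exact ⟨adj_symm_dart y,
        adj_same_tail (by rw [dart_symm_fst, hys, hzfst]) hzs.2.1.symm, hyz⟩
    · rintro p rfl d hd
      rcases hd with rfl | rfl | rfl
      · exact Or.inr rfl
      · exact Or.inl ⟨by simp [hys], fun h => hycw (Set.mem_singleton_iff.mp h)⟩
      · exact Or.inl ⟨by simp [hzfst], fun h => hzs.2.2 (Set.mem_singleton_iff.mp h)⟩
    · intro d hd
      refine ⟨(y, y.symm, z), ⟨rfl, ?_⟩, ?_⟩
      · rcases hd with ⟨hd1, hd2⟩ | rfl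
        · simp only [Walk.support_nil, List.mem_singleton, Set.mem_setOf_eq] at hd1
          have := cover3 hcubic (by rw [dart_symm_fst, hys]) (hcwf) hzfst
            hycw (hzs.2.1.symm) (hzs.2.2.symm) d hd1
          rcases this with h | h | h
          · exact Or.inr (Or.inl h)
          · exact absurd h (fun h' => hd2 (Set.mem_singleton_iff.mpr h'))
          · exact Or.inr (Or.inr h)
        · exact Or.inl rfl
      · rintro p ⟨rfl, -⟩; rfl
  | @cons v v' w h q ih =>
    intro y hcwf hnd hcws hys hyf hycw
    simp only [Walk.support_cons, List.nodup_cons, List.mem_cons, not_or] at hnd hcws hyf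
    obtain ⟨hvq, hnd'⟩ := hnd
    obtain ⟨hcwv, hcws'⟩ := hcws
    obtain ⟨hyfv, hyf'⟩ := hyf
    set o : F.Dart := ⟨(v, v'), h⟩ with ho
    have hofst : o.fst = v := rfl
    have hosnd : o.snd = v' := rfl
    have hv'q : v' ∈ q.support := q.start_mem_support
    have hyv' : y.fst ≠ v' := fun h' => hyf' (h' ▸ hv'q)
    have hosymm : o.symm ≠ cw := by
      intro h'
      exact hcwv (by rw [← h', dart_symm_snd, hofst])
    have hosym_ne : y.symm ≠ o := by
      intro h'
      exact hyv' (by rw [← dart_symm_snd y, h', hosnd])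
    have htails : y.symm.fst = o.fst := by rw [dart_symm_fst, hys, hofst]
    obtain ⟨T', hT'path, hT'sub, hT'cov⟩ := ih o hcwf hnd' hcws' rfl hvq hosymm
    have hzs := third_spec hcubic htails hosym_ne
    set z := third hcubic y.symm o with hzdef
    have hzfst : z.fst = v := by rw [hzs.1, dart_symm_fst, hys]
    have hyz : y ≠ z := fun h' => hyfv (h' ▸ hzfst)
    have hcov_v := cover3 hcubic (show y.symm.fst = v by rw [dart_symm_fst, hys])
      hofst hzfst hosym_ne hzs.2.1.symm hzs.2.2.symm
    have hcwqs : cw.fst ∈ q.support := hcwf ▸ q.end_mem_support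
    have hcw_ne_z : cw ≠ z := fun h' => hvq (by rw [h', hzfst] at hcwqs; exact hcwqs)
    have hcw_ne_o : cw ≠ o := fun h' => hvq (by rw [h', hofst] at hcwqs; exact hcwqs)
    have hyC' : y ∉ chainSet cw o q := by
      rintro (⟨h1, -⟩ | h1)
      · exact hyf' h1
      · exact hyfv (by rw [Set.mem_singleton_iff.mp h1, hofst])
    have hysymmC' : y.symm ∉ chainSet cw o q := by
      rintro (⟨h1, -⟩ | h1)
      · exact hvq (by rw [← show y.symm.fst = v by rw [dart_symm_fst, hys]]; exact h1)
      · exact hosym_ne (Set.mem_singleton_iff.mp h1)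
    have hzC' : z ∉ chainSet cw o q := by
      rintro (⟨h1, -⟩ | h1)
      · exact hvq (hzfst ▸ h1)
      · exact hzs.2.2 (Set.mem_singleton_iff.mp h1)
    have hC'C : ∀ d ∈ chainSet cw o q, d ∈ chainSet cw y (Walk.cons h q) := by
      rintro d (⟨h1, h2⟩ | h1)
      · refine Or.inl ⟨?_, h2⟩
        simp only [Walk.support_cons, List.mem_cons, Set.mem_setOf_eq]
        exact Or.inr h1
      · rw [Set.mem_singleton_iff.mp h1]
        refine Or.inl ⟨?_, fun hh => hcw_ne_o (Set.mem_singleton_iff.mp hh).symm⟩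
        simp only [Walk.support_cons, List.mem_cons, Set.mem_setOf_eq]
        exact Or.inl rfl
    have hyC : y ∈ chainSet cw y (Walk.cons h q) := Or.inr rfl
    have hysC : y.symm ∈ chainSet cw y (Walk.cons h q) := by
      refine Or.inl ⟨?_, fun hh => hycw (Set.mem_singleton_iff.mp hh)⟩
      simp only [Walk.support_cons, List.mem_cons, Set.mem_setOf_eq]
      exact Or.inl (by rw [dart_symm_fst, hys])
    have hzC : z ∈ chainSet cw y (Walk.cons h q) := by
      refine Or.inl ⟨?_, fun hh => hcw_ne_z (Set.mem_singleton_iff.mp hh).symm⟩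
      simp only [Walk.support_cons, List.mem_cons, Set.mem_setOf_eq]
      exact Or.inl hzfst
    have hCsub : ∀ d ∈ chainSet cw y (Walk.cons h q),
        d = y ∨ d = y.symm ∨ d = z ∨ d ∈ chainSet cw o q := by
      rintro d (⟨h1, h2⟩ | h1)
      · simp only [Walk.support_cons, List.mem_cons, Set.mem_setOf_eq] at h1
        rcases h1 with h1 | h1
        · rcases hcov_v d h1 with h3 | h3 | h3
          · exact Or.inr (Or.inl h3)
          · exact Or.inr (Or.inr (Or.inr (Or.inr (Set.mem_singleton_iff.mpr h3))))
          · exact Or.inr (Or.inr (Or.inl h3))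
        · exact Or.inr (Or.inr (Or.inr (Or.inl ⟨h1, h2⟩)))
      · exact Or.inl (Set.mem_singleton_iff.mp h1)
    refine ⟨insert (y, y.symm, z) T', ?_, ?_, ?_⟩
    · rintro p (rfl | hp)
      · exact ⟨adj_symm_dart y,
          adj_same_tail (by rw [dart_symm_fst, hys, hzfst]) hzs.2.1.symm, hyz⟩
      · exact hT'path p hp
    · rintro p (rfl | hp) d hd
      · rcases hd with rfl | rfl | rfl
        · exact hyC
        · exact hysC
        · exact hzC
      · exact hC'C d (hT'sub p hp d hd)
    · intro d hd
      rcases hCsub d hd with h4 | h4 | h4 | hd'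
      · refine ⟨(y, y.symm, z), ⟨Set.mem_insert _ _, Or.inl h4⟩, ?_⟩
        rintro p ⟨hp, hmem⟩
        rcases Set.mem_insert_iff.mp hp with rfl | hp'
        · rfl
        · exact absurd (hT'sub p hp' d hmem) (by rw [h4]; exact hyC')
      · refine ⟨(y, y.symm, z), ⟨Set.mem_insert _ _, Or.inr (Or.inl h4)⟩, ?_⟩
        rintro p ⟨hp, hmem⟩
        rcases Set.mem_insert_iff.mp hp with rfl | hp'
        · rfl
        · exact absurd (hT'sub p hp' d hmem) (by rw [h4]; exact hysymmC')
      · refine ⟨(y, y.symm, z), ⟨Set.mem_insert _ _, Or.inr (Or.inr h4)⟩, ?_⟩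
        rintro p ⟨hp, hmem⟩
        rcases Set.mem_insert_iff.mp hp with rfl | hp'
        · rfl
        · exact absurd (hT'sub p hp' d hmem) (by rw [h4]; exact hzC')
      · obtain ⟨p0, ⟨hp0T, hp0m⟩, hp0u⟩ := hT'cov d hd'
        refine ⟨p0, ⟨Set.mem_insert_of_mem _ hp0T, hp0m⟩, ?_⟩
        rintro p ⟨hp, hmem⟩
        rcases Set.mem_insert_iff.mp hp with rfl | hp'
        · exfalso
          rcases hmem with h5 | h5 | h5
          · rw [h5] at hd'; exact hyC' hd'
          · rw [h5] at hd'; exact hysymmC' hd'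
          · rw [h5] at hd'; exact hzC' hd'
        · exact hp0u p ⟨hp', hmem⟩

lemma tri_path (hcubic : CubicGraph F) (v : V) :
    (TriangleReplacement F).Adj (tri hcubic v).1 (tri hcubic v).2.1 ∧
      (TriangleReplacement F).Adj (tri hcubic v).2.1 (tri hcubic v).2.2 ∧
      (tri hcubic v).1 ≠ (tri hcubic v).2.2 := by
  obtain ⟨e1, e2, e3, n12, n13, n23, -⟩ := tri_spec hcubic v
  exact ⟨adj_same_tail (e1.trans e2.symm) n12, adj_same_tail (e2.trans e3.symm) n23, n13⟩

lemma transfer {W : Type*} (G : SimpleGraph W) (S : Set W) (Q : Set (W × W × W))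
    (hpath : ∀ p ∈ Q, G.Adj p.1 p.2.1 ∧ G.Adj p.2.1 p.2.2 ∧ p.1 ≠ p.2.2)
    (hsub : ∀ p ∈ Q, p.1 ∈ S ∧ p.2.1 ∈ S ∧ p.2.2 ∈ S)
    (hcov : ∀ d ∈ S, ∃! p, p ∈ Q ∧ Mem3 d p) :
    ∃ P : Set (↥S × ↥S × ↥S),
      (∀ p ∈ P, (G.induce S).Adj p.1 p.2.1 ∧ (G.induce S).Adj p.2.1 p.2.2 ∧ p.1 ≠ p.2.2) ∧
      ∀ v : ↥S, ∃! p : ↥S × ↥S × ↥S, p ∈ P ∧ (v = p.1 ∨ v = p.2.1 ∨ v = p.2.2) := by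
  classical
  refine ⟨{p : ↥S × ↥S × ↥S | ((p.1 : W), (p.2.1 : W), (p.2.2 : W)) ∈ Q}, ?_, ?_⟩
  · rintro p hp
    obtain ⟨h1, h2, h3⟩ := hpath _ hp
    exact ⟨h1, h2, fun he => h3 (by rw [he])⟩
  · intro x
    obtain ⟨p, ⟨hpQ, hmem⟩, huniq⟩ := hcov ↑x x.2
    obtain ⟨s1, s2, s3⟩ := hsub p hpQ
    refine ⟨(⟨p.1, s1⟩, ⟨p.2.1, s2⟩, ⟨p.2.2, s3⟩), ⟨?_, ?_⟩, ?_⟩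
    · show (p.1, p.2.1, p.2.2) ∈ Q
      simpa using hpQ
    · rcases hmem with h | h | h
      · exact Or.inl (Subtype.ext h)
      · exact Or.inr (Or.inl (Subtype.ext h))
      · exact Or.inr (Or.inr (Subtype.ext h))
    · rintro q' ⟨hq'Q, hq'mem⟩
      have hval : ((q'.1 : W), (q'.2.1 : W), (q'.2.2 : W)) = p := by
        apply huniq
        refine ⟨hq'Q, ?_⟩
        rcases hq'mem with h | h | h
        · exact Or.inl (congrArg Subtype.val h)
        · exact Or.inr (Or.inl (congrArg Subtype.val h))
        · exact Or.inr (Or.inr (congrArg Subtype.val h))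
      have h1 : (q'.1 : W) = p.1 := congrArg Prod.fst hval
      have h2 : (q'.2.1 : W) = p.2.1 := congrArg (fun r => r.2.1) hval
      have h3 : (q'.2.2 : W) = p.2.2 := congrArg (fun r => r.2.2) hval
      exact Prod.ext_iff.mpr ⟨Subtype.ext h1, Prod.ext_iff.mpr ⟨Subtype.ext h2, Subtype.ext h3⟩⟩

lemma case1 (hcubic : CubicGraph F) {a b c : F.Dart}
    (hab : a ≠ b) (hac : a ≠ c) (hbc : b ≠ c)
    (h1 : a.fst = b.fst) (h2 : c.fst = b.fst) :
    ∃ P : Set (↥({a, b, c}ᶜ : Set F.Dart) × ↥({a, b, c}ᶜ : Set F.Dart) × ↥({a, b, c}ᶜ : Set F.Dart)),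
      (∀ p ∈ P, ((TriangleReplacement F).induce ({a, b, c}ᶜ : Set F.Dart)).Adj p.1 p.2.1 ∧
        ((TriangleReplacement F).induce ({a, b, c}ᶜ : Set F.Dart)).Adj p.2.1 p.2.2 ∧ p.1 ≠ p.2.2) ∧
      ∀ v, ∃! p, p ∈ P ∧ (v = p.1 ∨ v = p.2.1 ∨ v = p.2.2) := by
  have hne : ∀ d : F.Dart, d.fst ≠ b.fst → d ∈ ({a, b, c}ᶜ : Set F.Dart) := by
    intro d hd
    simp only [Set.mem_compl_iff, Set.mem_insert_iff, Set.mem_singleton_iff, not_or]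
    refine ⟨fun h' => hd (by rw [h', h1]), fun h' => hd (by rw [h']), fun h' => hd (by rw [h', h2])⟩
  apply transfer _ _ ({p | ∃ v', v' ≠ b.fst ∧ p = tri hcubic v'})
  · rintro p ⟨v', hv', rfl⟩
    exact tri_path hcubic v'
  · rintro p ⟨v', hv', rfl⟩
    obtain ⟨e1, e2, e3, -⟩ := tri_spec hcubic v'
    exact ⟨hne _ (by rw [e1]; exact hv'), hne _ (by rw [e2]; exact hv'),
      hne _ (by rw [e3]; exact hv')⟩
  · intro d hd
    simp only [Set.mem_compl_iff, Set.mem_insert_iff, Set.mem_singleton_iff, not_or] at hd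
    have hdfst : d.fst ≠ b.fst := by
      intro h'
      have := cover3 hcubic h1 rfl h2 hab hac hbc d h'
      tauto
    refine ⟨tri hcubic d.fst, ⟨⟨d.fst, hdfst, rfl⟩,
      (tri_spec hcubic d.fst).2.2.2.2.2.2 d rfl⟩, ?_⟩
    rintro p ⟨⟨v', hv', rfl⟩, hmem⟩
    rw [tri_mem_fst hcubic hmem]

lemma case2 (hcubic : CubicGraph F) {a b : F.Dart}
    (hconn2 : (F.induce ({b.fst} : Set V)ᶜ).Connected)
    (hab : a ≠ b) (hfst : a.fst = b.fst) :
    ∃ P : Set (↥({a, b, b.symm}ᶜ : Set F.Dart) × ↥({a, b, b.symm}ᶜ : Set F.Dart) ×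
        ↥({a, b, b.symm}ᶜ : Set F.Dart)),
      (∀ p ∈ P, ((TriangleReplacement F).induce ({a, b, b.symm}ᶜ : Set F.Dart)).Adj p.1 p.2.1 ∧
        ((TriangleReplacement F).induce ({a, b, b.symm}ᶜ : Set F.Dart)).Adj p.2.1 p.2.2 ∧
        p.1 ≠ p.2.2) ∧
      ∀ v, ∃! p, p ∈ P ∧ (v = p.1 ∨ v = p.2.1 ∨ v = p.2.2) := by
  classical
  have hxs := third_spec hcubic hfst hab
  set x := third hcubic a b with hxdef
  have hxfst : x.fst = b.fst := hxs.1.trans hfst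
  have hsu : x.snd ≠ b.fst := fun h' => (Dart.snd_ne_fst x) (h'.trans hxfst.symm)
  have hsw : x.snd ≠ b.snd := by
    intro h'
    exact hxs.2.2 (Dart.ext _ _ (Prod.ext_iff.mpr ⟨hxfst, h'⟩))
  have hwu : b.snd ≠ b.fst := Dart.snd_ne_fst b
  have hreach := hconn2.preconnected ⟨x.snd, by simpa using hsu⟩ ⟨b.snd, by simpa using hwu⟩
  obtain ⟨p0⟩ := hreach
  set p1 := p0.toPath with hp1def
  set q : F.Walk x.snd b.snd :=
    p1.1.map (SimpleGraph.Embedding.induce ({b.fst} : Set V)ᶜ).toHom with hqdef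
  have hqsup : q.support = p1.1.support.map Subtype.val := by
    rw [hqdef]
    exact Walk.support_map _ _
  have hqnodup : q.support.Nodup := by
    rw [hqsup]
    exact (p1.2.support_nodup).map Subtype.val_injective
  have husup : b.fst ∉ q.support := by
    rw [hqsup]
    intro hmem
    obtain ⟨⟨t, ht⟩, -, h'⟩ := List.mem_map.mp hmem
    exact ht (Set.mem_singleton_iff.mpr h')
  have hchain := chain hcubic b.symm q x rfl hqnodup husup rfl
    (by rw [hxfst]; exact husup)
    (by intro h'; exact hsw (by rw [← dart_symm_fst x, h', dart_symm_fst]))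
  obtain ⟨T, hTpath, hTsub, hTcov⟩ := hchain
  have hxna : x ≠ a := hxs.2.1
  have hxnb : x ≠ b := hxs.2.2
  have hxnbs : x ≠ b.symm := by
    intro h'
    exact hwu (by rw [← dart_symm_fst b, ← h', hxfst])
  have hwq : b.snd ∈ q.support := q.end_mem_support
  have hCS : ∀ d ∈ chainSet b.symm x q, d ∈ ({a, b, b.symm}ᶜ : Set F.Dart) := by
    rintro d (⟨hd1, hd2⟩ | hd1)
    · simp only [Set.mem_setOf_eq] at hd1
      simp only [Set.mem_compl_iff, Set.mem_insert_iff, Set.mem_singleton_iff, not_or]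
      refine ⟨?_, ?_, fun h' => hd2 (Set.mem_singleton_iff.mpr h')⟩
      · intro h'
        rw [h', hfst] at hd1
        exact husup hd1
      · intro h'
        rw [h'] at hd1
        exact husup hd1
    · rw [Set.mem_singleton_iff.mp hd1]
      simp only [Set.mem_compl_iff, Set.mem_insert_iff, Set.mem_singleton_iff, not_or]
      exact ⟨hxna, hxnb, hxnbs⟩
  have htriS : ∀ v' : V, v' ∉ q.support → v' ≠ b.fst →
      ∀ d, Mem3 d (tri hcubic v') → d ∈ ({a, b, b.symm}ᶜ : Set F.Dart) := by
    intro v' hv1 hv2 d hd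
    have hdf := tri_mem_fst hcubic hd
    simp only [Set.mem_compl_iff, Set.mem_insert_iff, Set.mem_singleton_iff, not_or]
    refine ⟨?_, ?_, ?_⟩
    · intro h'; rw [h', hfst] at hdf; exact hv2 hdf.symm
    · intro h'; rw [h'] at hdf; exact hv2 hdf.symm
    · intro h'
      rw [h', dart_symm_fst] at hdf
      apply hv1
      rw [← hdf]
      exact hwq
  apply transfer _ _ (T ∪ {p | ∃ v', v' ∉ q.support ∧ v' ≠ b.fst ∧ p = tri hcubic v'})
  · rintro p (hp | ⟨v', -, -, rfl⟩)
    · exact hTpath p hp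
    · exact tri_path hcubic v'
  · rintro p (hp | ⟨v', hv1, hv2, rfl⟩)
    · exact ⟨hCS _ (hTsub p hp _ (Or.inl rfl)), hCS _ (hTsub p hp _ (Or.inr (Or.inl rfl))),
        hCS _ (hTsub p hp _ (Or.inr (Or.inr rfl)))⟩
    · exact ⟨htriS v' hv1 hv2 _ (Or.inl rfl), htriS v' hv1 hv2 _ (Or.inr (Or.inl rfl)),
        htriS v' hv1 hv2 _ (Or.inr (Or.inr rfl))⟩
  · intro d hd
    simp only [Set.mem_compl_iff, Set.mem_insert_iff, Set.mem_singleton_iff, not_or] at hd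
    by_cases hdq : d.fst ∈ q.support ∨ d.fst = b.fst
    · have hdC : d ∈ chainSet b.symm x q := by
        rcases hdq with hdq | hdq
        · exact Or.inl ⟨hdq, fun hh => hd.2.2 (Set.mem_singleton_iff.mp hh)⟩
        · have := cover3 hcubic hfst rfl hxfst hab hxs.2.1.symm hxs.2.2.symm d hdq
          rcases this with h' | h' | h'
          · exact absurd h' hd.1
          · exact absurd h' hd.2.1
          · exact Or.inr (Set.mem_singleton_iff.mpr h')
      obtain ⟨p0', hp0', hp0u⟩ := hTcov d hdC
      refine ⟨p0', ⟨Or.inl hp0'.1, hp0'.2⟩, ?_⟩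
      rintro p' ⟨hp' | ⟨v', hv1, hv2, rfl⟩, hmem⟩
      · exact hp0u p' ⟨hp', hmem⟩
      · exfalso
        have hdf := tri_mem_fst hcubic hmem
        rcases hdq with hdq | hdq
        · rw [hdf] at hdq; exact hv1 hdq
        · rw [hdf] at hdq; exact hv2 hdq
    · push_neg at hdq
      refine ⟨tri hcubic d.fst, ⟨Or.inr ⟨d.fst, hdq.1, hdq.2, rfl⟩,
        (tri_spec hcubic d.fst).2.2.2.2.2.2 d rfl⟩, ?_⟩
      rintro p' ⟨hp' | ⟨v', hv1, hv2, rfl⟩, hmem⟩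
      · exfalso
        have := hTsub p' hp' d hmem
        rcases this with ⟨h1', -⟩ | h1'
        · exact hdq.1 h1'
        · rw [Set.mem_singleton_iff.mp h1'] at hdq
          exact hdq.2 hxfst
      · rw [tri_mem_fst hcubic hmem]

end LambdaAux

/-- if `F` is a cubic 2-connected graph and `G = F^Δ`, then for every
3-vertex path `L = a-b-c` in `G`, the graph `G − L` has a `Λ`-factor. -/
theorem stmt_0 {V : Type*} [Fintype V] (F : SimpleGraph V)
    (hcubic : CubicGraph F) (hconn : KConnected 2 F)
    (a b c : F.Dart)
    (hab : (TriangleReplacement F).Adj a b) (hbc : (TriangleReplacement F).Adj b c)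
    (hac : a ≠ c) :
    HasLambdaFactor ((TriangleReplacement F).induce ({a, b, c}ᶜ : Set F.Dart)) := by
  have hab' : a ≠ b ∧ (a.toProd.1 = b.toProd.1 ∨ b = a.symm) := hab
  have hbc' : b ≠ c ∧ (b.toProd.1 = c.toProd.1 ∨ c = b.symm) := hbc
  obtain ⟨hne1, hA⟩ := hab'
  obtain ⟨hne2, hB⟩ := hbc'
  rcases hA with hA | hA
  · rcases hB with hB | hB
    · obtain ⟨P, h1, h2⟩ := LambdaAux.case1 hcubic hne1 hac hne2 hA hB.symm
      exact ⟨P, h1, h2⟩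
    · subst hB
      obtain ⟨P, h1, h2⟩ := LambdaAux.case2 hcubic
        (hconn.2 {b.fst} (by rw [Set.ncard_singleton]; norm_num)) hne1 hA
      exact ⟨P, h1, h2⟩
  · rcases hB with hB | hB
    · have hca : a = b.symm := by rw [hA, SimpleGraph.Dart.symm_symm]
      have hset : ({a, b, c} : Set F.Dart) = {c, b, b.symm} := by
        rw [hca]
        ext d
        simp only [Set.mem_insert_iff, Set.mem_singleton_iff]
        tauto
      rw [hset]
      obtain ⟨P, h1, h2⟩ := LambdaAux.case2 hcubic
        (hconn.2 {b.fst} (by rw [Set.ncard_singleton]; norm_num)) hne2.symm hB.symm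
      exact ⟨P, h1, h2⟩
    · exfalso
      apply hac
      rw [hB, hA, SimpleGraph.Dart.symm_symm]
end

section
/- Let F be a cubic 2-connected graph and let G = F^Δ be the graph obtained from F by replacing each vertex of F by a triangle. If L is a 3-vertex path in G whose three vertices induce a triangle in G, then G has a Λ-factor R containing L such that the vertex set of every component 3-vertex path of R induces a triangle in G. -/
open SimpleGraph

/-- The set of darts with a given tail has 3 elements in a cubic graph. -/
lemma tailSet_ncard {V : Type*} [Fintype V] (F : SimpleGraph V)
    (hcubic : CubicGraph F) (v : V) :
    {d : F.Dart | d.toProd.1 = v}.ncard = 3 := by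
  have e : {d : F.Dart | d.toProd.1 = v} ≃ F.neighborSet v :=
    { toFun := fun d => ⟨d.1.toProd.2, by
        have h := d.1.adj
        have hv : d.1.toProd.1 = v := d.2
        rw [hv] at h
        exact h⟩
      invFun := fun n => ⟨⟨(v, n.1), n.2⟩, rfl⟩
      left_inv := fun d => by
        apply Subtype.ext
        apply SimpleGraph.Dart.ext
        have hv : d.1.toProd.1 = v := d.2
        exact Prod.ext hv.symm rfl
      right_inv := fun n => rfl }
  rw [← Nat.card_coe_set_eq, Nat.card_congr e, Nat.card_coe_set_eq]
  exact hcubic v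

/-- if `F` is a cubic 2-connected graph, `G = F^Δ`, and `L = a-b-c` is a
3-vertex path in `G` whose vertices induce a triangle, then `G` has a `Λ`-factor
containing `L` all of whose components induce triangles in `G`. -/
theorem stmt_1 {V : Type*} [Fintype V] (F : SimpleGraph V)
    (hcubic : CubicGraph F) (hconn : KConnected 2 F)
    (a b c : F.Dart)
    (hab : (TriangleReplacement F).Adj a b) (hbc : (TriangleReplacement F).Adj b c)
    (hac : a ≠ c) (htri : (TriangleReplacement F).Adj a c) :
    ∃ P : Set (F.Dart × F.Dart × F.Dart),
      IsLambdaFactor (TriangleReplacement F) P ∧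
      ((a, b, c) ∈ P ∨ (c, b, a) ∈ P) ∧
      ∀ p ∈ P, (TriangleReplacement F).Adj p.1 p.2.2 := by
  classical
  obtain ⟨hab_ne, hab2⟩ := hab
  obtain ⟨hbc_ne, hbc2⟩ := hbc
  obtain ⟨_, htri2⟩ := htri
  -- First: a, b, c all have the same tail.
  have h1 : a.toProd.1 = b.toProd.1 := by
    rcases hab2 with h | h
    · exact h
    · -- b = a.symm
      exfalso
      rcases hbc2 with h' | h'
      · rcases htri2 with h'' | h''
        · rw [h] at h'
          simp only [SimpleGraph.Dart.symm_toProd, Prod.fst_swap] at h'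
          exact a.fst_ne_snd (h''.trans h'.symm)
        · rw [h'', h] at hbc_ne
          exact hbc_ne rfl
      · rw [h, SimpleGraph.Dart.symm_symm] at h'
        exact hac h'.symm
  have h2 : b.toProd.1 = c.toProd.1 := by
    rcases hbc2 with h | h
    · exact h
    · -- c = b.symm
      exfalso
      rcases htri2 with h' | h'
      · rw [h] at h'
        simp only [SimpleGraph.Dart.symm_toProd, Prod.fst_swap] at h'
        rw [h1] at h'
        exact b.fst_ne_snd h'
      · rw [h'] at h
        have := congrArg SimpleGraph.Dart.symm h
        rw [SimpleGraph.Dart.symm_symm, SimpleGraph.Dart.symm_symm] at this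
        exact hab_ne this
  set v₀ := a.toProd.1 with hv₀
  -- the tail set of v₀ is exactly {a, b, c}
  have habc_sub : ({a, b, c} : Set F.Dart) ⊆ {d : F.Dart | d.toProd.1 = v₀} := by
    rintro d (rfl | rfl | rfl)
    · rfl
    · exact h1.symm
    · exact (h1.trans h2).symm
  have habc_card : ({a, b, c} : Set F.Dart).ncard = 3 := by
    rw [Set.ncard_insert_of_notMem (by simp [hab_ne, hac]),
      Set.ncard_insert_of_notMem (by simp [hbc_ne]), Set.ncard_singleton]
  have hT_fin : ∀ v : V, ({d : F.Dart | d.toProd.1 = v}).Finite := by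
    intro v
    have : Finite F.Dart := Finite.of_injective _ SimpleGraph.Dart.toProd_injective
    exact Set.toFinite _
  have habc_eq : ({a, b, c} : Set F.Dart) = {d : F.Dart | d.toProd.1 = v₀} :=
    Set.eq_of_subset_of_ncard_le habc_sub
      (by rw [habc_card, tailSet_ncard F hcubic]) (hT_fin v₀)
  -- choose for every vertex a triple enumerating its tail set
  have hex : ∀ v : V, ∃ p : F.Dart × F.Dart × F.Dart,
      p.1 ≠ p.2.1 ∧ p.1 ≠ p.2.2 ∧ p.2.1 ≠ p.2.2 ∧
      {d : F.Dart | d.toProd.1 = v} = {p.1, p.2.1, p.2.2} ∧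
      (v = v₀ → p = (a, b, c)) := by
    intro v
    by_cases hv : v = v₀
    · subst hv
      exact ⟨(a, b, c), hab_ne, hac, hbc_ne, habc_eq.symm, fun _ => rfl⟩
    · obtain ⟨x, y, z, hxy, hxz, hyz, hset⟩ :=
        Set.ncard_eq_three.mp (tailSet_ncard F hcubic v)
      exact ⟨(x, y, z), hxy, hxz, hyz, hset, fun h => absurd h hv⟩
  choose f hf1 hf2 hf3 hf4 hf5 using hex
  refine ⟨Set.range f, ⟨?_, ?_⟩, Or.inl ⟨v₀, hf5 v₀ rfl⟩, ?_⟩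
  · -- each triple is a path
    rintro p ⟨v, rfl⟩
    have hx : (f v).1.toProd.1 = v := by
      have : (f v).1 ∈ {d : F.Dart | d.toProd.1 = v} := by rw [hf4]; simp
      exact this
    have hy : (f v).2.1.toProd.1 = v := by
      have : (f v).2.1 ∈ {d : F.Dart | d.toProd.1 = v} := by rw [hf4]; simp
      exact this
    have hz : (f v).2.2.toProd.1 = v := by
      have : (f v).2.2 ∈ {d : F.Dart | d.toProd.1 = v} := by rw [hf4]; simp
      exact this
    exact ⟨⟨hf1 v, Or.inl (hx.trans hy.symm)⟩, ⟨hf3 v, Or.inl (hy.trans hz.symm)⟩, hf2 v⟩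
  · -- every dart lies in exactly one triple
    intro d
    refine ⟨f d.toProd.1, ⟨⟨d.toProd.1, rfl⟩, ?_⟩, ?_⟩
    · have : d ∈ ({(f d.toProd.1).1, (f d.toProd.1).2.1, (f d.toProd.1).2.2} : Set F.Dart) := by
        rw [← hf4]; rfl
      simpa only [Set.mem_insert_iff, Set.mem_singleton_iff, eq_comm] using this
    · rintro q ⟨⟨w, rfl⟩, hq⟩
      have hd : d ∈ {d : F.Dart | d.toProd.1 = w} := by
        rw [hf4]
        rcases hq with h | h | h <;> simp [h]
      have : d.toProd.1 = w := hd
      rw [this]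
  · -- each triple induces a triangle
    rintro p ⟨v, rfl⟩
    have hx : (f v).1.toProd.1 = v := by
      have : (f v).1 ∈ {d : F.Dart | d.toProd.1 = v} := by rw [hf4]; simp
      exact this
    have hz : (f v).2.2.toProd.1 = v := by
      have : (f v).2.2 ∈ {d : F.Dart | d.toProd.1 = v} := by rw [hf4]; simp
      exact this
    exact ⟨hf2 v, Or.inl (hx.trans hz.symm)⟩
end

section
/- Let F be a cubic 2-connected graph and let G = F^Δ be the graph obtained from F by replacing each vertex of F by a triangle. If L is a 3-vertex path in G whose three vertices do not induce a triangle in G, then G has a Λ-factor R containing L such that at least one component 3-vertex path of R has vertex set inducing a triangle in G. -/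
open SimpleGraph

theorem tr_adj {V : Type*} {F : SimpleGraph V} {d d' : F.Dart} :
    (TriangleReplacement F).Adj d d' ↔ d ≠ d' ∧ (d.toProd.1 = d'.toProd.1 ∨ d' = d.symm) := Iff.rfl


section AuxLambda
variable {V : Type*}

def wtake {F : SimpleGraph V} : ∀ {s t : V}, (q : F.Walk s t) → (n : ℕ) → F.Walk s (q.getVert n)
  | _, _, q, 0 => (Walk.nil).copy rfl (q.getVert_zero).symm
  | _, _, .nil, _+1 => .nil
  | _, _, .cons h q, n+1 => .cons h (wtake q n)

def wdrop {F : SimpleGraph V} : ∀ {s t : V}, (q : F.Walk s t) → (n : ℕ) → F.Walk (q.getVert n) t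
  | _, _, q, 0 => q.copy (q.getVert_zero).symm rfl
  | _, _, .nil, _+1 => .nil
  | _, _, .cons _ q, n+1 => wdrop q n

theorem wtake_length {F : SimpleGraph V} : ∀ {s t : V} (q : F.Walk s t) (n : ℕ), (wtake q n).length = min n q.length
  | _, _, q, 0 => by simp [wtake]
  | _, _, .nil, n+1 => by simp [wtake]
  | _, _, .cons h q, n+1 => by rw [wtake]; show (wtake q n).length + 1 = _; rw [wtake_length q n, Walk.length_cons]; omega

theorem wdrop_length {F : SimpleGraph V} : ∀ {s t : V} (q : F.Walk s t) (n : ℕ), (wdrop q n).length = q.length - n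
  | _, _, q, 0 => by simp [wdrop]
  | _, _, .nil, n+1 => by simp [wdrop]
  | _, _, .cons h q, n+1 => by simp [wdrop, wdrop_length q n]

theorem wtake_support {F : SimpleGraph V} : ∀ {s t : V} (q : F.Walk s t) (n : ℕ), (wtake q n).support ⊆ q.support
  | _, _, q, 0 => by simp [wtake]
  | _, _, .nil, n+1 => fun a h => h
  | _, _, .cons h q, n+1 => by
      simp only [wtake, Walk.support_cons]
      exact List.cons_subset_cons _ (wtake_support q n)

theorem wdrop_support {F : SimpleGraph V} : ∀ {s t : V} (q : F.Walk s t) (n : ℕ), (wdrop q n).support ⊆ q.support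
  | _, _, q, 0 => by simp [wdrop]
  | _, _, .nil, n+1 => fun a h => h
  | _, _, .cons h q, n+1 => by
      simp only [wdrop, Walk.support_cons]
      exact List.Subset.trans (wdrop_support q n) (List.subset_cons_self _ _)

theorem exists_good_path [Fintype V] (F : SimpleGraph V)
    (hcubic : CubicGraph F) (hconn : KConnected 2 F)
    (u x w z : V) (hx : F.Adj u x) (hw : F.Adj u w) (hz : F.Adj u z)
    (hxw : x ≠ w) (hxz : x ≠ z) (hwz : w ≠ z) :
    ∃ q : F.Walk x w, q.IsPath ∧ u ∉ q.support ∧ ∃ y, y ≠ u ∧ y ∉ q.support := by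
  classical
  -- connectivity of F - u
  have hconn' : (F.induce ({u} : Set V)ᶜ).Connected := by
    refine hconn.2 {u} ?_
    simp [Set.ncard_singleton]
  have hxu : x ∈ ({u} : Set V)ᶜ := by simp [hx.ne']
  have hwu : w ∈ ({u} : Set V)ᶜ := by simp [hw.ne']
  obtain ⟨q'⟩ := hconn'.preconnected ⟨x, hxu⟩ ⟨w, hwu⟩
  let w0 : F.Walk x w := q'.map (SimpleGraph.Embedding.induce ({u} : Set V)ᶜ).toHom
  have hw0 : u ∉ w0.support := by
    intro hmem
    replace hmem : u ∈ (q'.map (SimpleGraph.Embedding.induce ({u} : Set V)ᶜ).toHom).support := hmem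
    rw [Walk.support_map, List.mem_map] at hmem
    obtain ⟨⟨v, hv⟩, _, h2⟩ := hmem
    have hvu : v = u := by simpa using h2
    exact hv (by simp [hvu])
  -- minimal length u-avoiding walk
  have hS : ∃ n : ℕ, ∃ q : F.Walk x w, u ∉ q.support ∧ q.length = n := ⟨_, w0, hw0, rfl⟩
  set k := Nat.find hS with hk
  obtain ⟨q0, hq0u, hq0l⟩ := Nat.find_spec hS
  let q : F.Walk x w := q0.bypass
  have hqp : q.IsPath := Walk.bypass_isPath q0
  have hqsub : q.support ⊆ q0.support := Walk.support_bypass_subset q0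
  have hqu : u ∉ q.support := fun h => hq0u (hqsub h)
  have hqle : q.length ≤ k := le_trans (Walk.length_bypass_le q0) (le_of_eq hq0l)
  have hqge : k ≤ q.length := Nat.find_le ⟨q, hqu, rfl⟩
  have hql : q.length = k := le_antisymm hqle hqge
  refine ⟨q, hqp, hqu, ?_⟩
  by_contra hcon
  push_neg at hcon
  -- hcon : ∀ y, y ≠ u → y ∈ q.support
  -- shortcut claim
  have shortcut : ∀ i j : ℕ, i < j → j ≤ k → F.Adj (q.getVert i) (q.getVert j) → j = i + 1 := by
    intro i j hij hjk hadj
    by_contra hne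
    have hW : u ∉ ((wtake q i).append (Walk.cons hadj (wdrop q j))).support := by
      intro hmem
      rw [Walk.support_append] at hmem
      rcases List.mem_append.mp hmem with h | h
      · exact hqu (wtake_support q i h)
      · exact hqu (wdrop_support q j (by simpa [Walk.support_cons] using h))
    have hlen : ((wtake q i).append (Walk.cons hadj (wdrop q j))).length
        = min i q.length + 1 + (q.length - j) := by
      simp [Walk.length_append, wtake_length, wdrop_length]
      omega
    have hkle : k ≤ ((wtake q i).append (Walk.cons hadj (wdrop q j))).length :=
      Nat.find_le ⟨_, hW, rfl⟩
    rw [hlen] at hkle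
    omega
  -- neighbors of u
  have hNu : F.neighborSet u = {x, w, z} := by
    have hsub : ({x, w, z} : Set V) ⊆ F.neighborSet u := by
      intro m hm
      rcases hm with h | h | h <;> subst h <;> assumption
    have h3 : ({x, w, z} : Set V).ncard = 3 := by
      rw [Set.ncard_insert_of_notMem (by simp [hxw, hxz]) (Set.toFinite _), Set.ncard_pair hwz]
    exact (Set.eq_of_subset_of_ncard_le hsub (by rw [hcubic u, h3]) (Set.toFinite _)).symm
  -- interior vertices
  have hmemsup : ∀ i : ℕ, i ≤ k → q.getVert i ∈ q.support := by
    intro i hi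
    exact Walk.mem_support_iff_exists_getVert.mpr ⟨i, rfl, hql ▸ hi⟩
  have hint : ∀ i : ℕ, 0 < i → i < k → q.getVert i ∈ ({x, w, z} : Set V) := by
    intro i h0 hik
    by_contra hv
    set v := q.getVert i with hvdef
    have hvu : v ≠ u := fun h => hqu (h ▸ hmemsup i (le_of_lt hik))
    have hvnadj : ¬ F.Adj u v := by
      intro h
      exact hv (hNu ▸ h)
    have hsub2 : F.neighborSet v ⊆ {q.getVert (i-1), q.getVert (i+1)} := by
      intro m hm
      have hmu : m ≠ u := fun h => hvnadj (h ▸ (show F.Adj v m from hm).symm)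
      have hadjm : F.Adj v m := hm
      obtain ⟨j, hj1, hj2⟩ := Walk.mem_support_iff_exists_getVert.mp (hcon m hmu)
      rw [hql] at hj2
      rcases lt_trichotomy j i with h | h | h
      · have h4 := shortcut j i h (le_of_lt hik) (by rw [hj1]; exact hadjm.symm)
        left; rw [← hj1]; congr 1; omega
      · exfalso
        have hmv : m = v := by rw [← hj1, h]
        rw [hmv] at hadjm
        exact F.irrefl hadjm
      · have h4 := shortcut i j h hj2 (by rw [hj1]; exact hadjm)
        right; rw [← hj1, h4]; rfl
    have : (3:ℕ) ≤ 2 := by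
      calc (3:ℕ) = (F.neighborSet v).ncard := (hcubic v).symm
      _ ≤ ({q.getVert (i-1), q.getVert (i+1)} : Set V).ncard :=
          Set.ncard_le_ncard hsub2 (Set.toFinite _)
      _ ≤ 2 := by
          refine (Set.ncard_insert_le _ _).trans ?_
          simp [Set.ncard_singleton]
    omega
  -- support subset
  have hsupsub : ∀ m ∈ q.support, m ∈ ({x, w, z} : Set V) := by
    intro m hm
    obtain ⟨j, hj1, hj2⟩ := Walk.mem_support_iff_exists_getVert.mp hm
    rw [hql] at hj2
    rcases Nat.eq_zero_or_pos j with h | h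
    · subst h; rw [Walk.getVert_zero] at hj1; subst hj1; left; rfl
    rcases eq_or_lt_of_le hj2 with h2 | h2
    · subst h2; rw [← hql, Walk.getVert_length] at hj1; subst hj1; right; left; rfl
    · exact hj1 ▸ hint j h h2
  -- x adjacent to w
  have hxwadj : F.Adj x w := by
    by_contra hnadj
    have hsub3 : F.neighborSet x ⊆ {u, z} := by
      intro m hm
      have hadj : F.Adj x m := hm
      by_cases hmu : m = u
      · left; exact hmu
      · have := hsupsub m (hcon m hmu)
        rcases this with h | h | h
        · exact absurd (h ▸ hadj) F.irrefl
        · exact absurd (h ▸ hadj) hnadj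
        · right; exact h
    have : (3:ℕ) ≤ 2 := by
      calc (3:ℕ) = (F.neighborSet x).ncard := (hcubic x).symm
      _ ≤ ({u, z} : Set V).ncard := Set.ncard_le_ncard hsub3 (Set.toFinite _)
      _ ≤ 2 := by
          refine (Set.ncard_insert_le _ _).trans ?_
          simp [Set.ncard_singleton]
    omega
  -- then k ≤ 1
  have hk1 : k ≤ 1 := by
    have hns : u ∉ (Walk.cons hxwadj Walk.nil).support := by
      simp only [Walk.support_cons, Walk.support_nil, List.mem_cons, List.mem_singleton,
        List.not_mem_nil]
      push_neg
      exact ⟨hx.ne, hw.ne, trivial⟩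
    exact Nat.find_le (⟨Walk.cons hxwadj Walk.nil, hns, by simp⟩ :
      ∃ q : F.Walk x w, u ∉ q.support ∧ q.length = 1)
  -- contradiction : x, w, z all in support, support length ≤ 2
  have hxs : x ∈ q.support := Walk.start_mem_support q
  have hws : w ∈ q.support := Walk.end_mem_support q
  have hzs : z ∈ q.support := hcon z (fun h => F.irrefl (h ▸ hz))
  have hcard : ({x, w, z} : Finset V).card ≤ q.support.toFinset.card := by
    apply Finset.card_le_card
    intro m hm
    simp only [Finset.mem_insert, Finset.mem_singleton] at hm
    rw [List.mem_toFinset]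
    rcases hm with h | h | h <;> subst h <;> assumption
  have h3 : ({x, w, z} : Finset V).card = 3 := by
    rw [Finset.card_insert_of_notMem (by simp [hxw, hxz]), Finset.card_insert_of_notMem (by simp [hwz]), Finset.card_singleton]
  have hle : q.support.toFinset.card ≤ q.support.length := List.toFinset_card_le _
  rw [Walk.length_support, hql] at hle
  omega

def dartAt (F : SimpleGraph V) (v : V) : Set F.Dart := {d | d.toProd.1 = v}

theorem dartAt_ncard [Finite V] {F : SimpleGraph V} (hcubic : CubicGraph F) (v : V) :
    (dartAt F v).ncard = 3 := by
  have him : (fun d : F.Dart => d.toProd.2) '' dartAt F v = F.neighborSet v := by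
    ext m
    constructor
    · rintro ⟨d, hd, rfl⟩
      exact hd ▸ d.adj
    · intro hm
      exact ⟨⟨(v, m), hm⟩, rfl, rfl⟩
  have hinj : Set.InjOn (fun d : F.Dart => d.toProd.2) (dartAt F v) := by
    intro d hd d' hd' h
    exact Dart.ext _ _ (Prod.ext (hd.trans hd'.symm) h)
  rw [← Set.ncard_image_of_injOn hinj, him, hcubic v]

open Classical in
noncomputable def third (F : SimpleGraph V) (v : V) (e1 e2 : F.Dart) : F.Dart :=
  if h : (dartAt F v \ {e1, e2}).Nonempty then h.choose else e1

theorem third_spec [Finite V] {F : SimpleGraph V} (hcubic : CubicGraph F) (v : V)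
    (e1 e2 : F.Dart) :
    third F v e1 e2 ∈ dartAt F v ∧ third F v e1 e2 ≠ e1 ∧ third F v e1 e2 ≠ e2 := by
  have : Finite F.Dart := Finite.of_injective _ Dart.toProd_injective
  have h : (dartAt F v \ {e1, e2}).Nonempty := by
    rw [Set.nonempty_iff_ne_empty]
    intro hemp
    have hsub : dartAt F v ⊆ {e1, e2} := by
      intro e he
      by_contra hne
      exact (Set.eq_empty_iff_forall_notMem.mp hemp e) ⟨he, hne⟩
    have := Set.ncard_le_ncard hsub (Set.toFinite _)
    rw [dartAt_ncard hcubic v] at this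
    have h2 : ({e1, e2} : Set F.Dart).ncard ≤ 2 := by
      refine (Set.ncard_insert_le _ _).trans ?_
      simp [Set.ncard_singleton]
    omega
  have hspec := h.choose_spec
  rw [third]
  rw [dif_pos h]
  refine ⟨hspec.1, ?_, ?_⟩
  · intro heq; exact hspec.2 (by rw [heq]; left; rfl)
  · intro heq; exact hspec.2 (by rw [heq]; right; rfl)

theorem dartAt_cases [Finite V] {F : SimpleGraph V} (hcubic : CubicGraph F) (v : V)
    (e1 e2 : F.Dart) (h1 : e1 ∈ dartAt F v) (h2 : e2 ∈ dartAt F v) (hne : e1 ≠ e2) :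
    ∀ e ∈ dartAt F v, e = e1 ∨ e = e2 ∨ e = third F v e1 e2 := by
  have : Finite F.Dart := Finite.of_injective _ Dart.toProd_injective
  obtain ⟨h3, hn1, hn2⟩ := third_spec hcubic v e1 e2
  have hsub : ({e1, e2, third F v e1 e2} : Set F.Dart) ⊆ dartAt F v := by
    intro e he
    rcases he with h | h | h <;> subst h <;> assumption
  have hcard : ({e1, e2, third F v e1 e2} : Set F.Dart).ncard = 3 := by
    have hm1 : e1 ∉ ({e2, third F v e1 e2} : Set F.Dart) := by
      simp only [Set.mem_insert_iff, Set.mem_singleton_iff]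
      push_neg
      exact ⟨hne, Ne.symm hn1⟩
    have hm2 : e2 ∉ ({third F v e1 e2} : Set F.Dart) := by
      simp only [Set.mem_singleton_iff]
      exact Ne.symm hn2
    rw [Set.ncard_insert_of_notMem hm1 (Set.toFinite _),
      Set.ncard_insert_of_notMem hm2 (Set.toFinite _), Set.ncard_singleton]
  have heq := Set.eq_of_subset_of_ncard_le hsub
    (by rw [dartAt_ncard hcubic v, hcard]) (Set.toFinite _)
  intro e he
  have : e ∈ ({e1, e2, third F v e1 e2} : Set F.Dart) := heq ▸ he
  exact this

abbrev covered {F : SimpleGraph V} (e : F.Dart) (p : F.Dart × F.Dart × F.Dart) : Prop :=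
  e = p.1 ∨ e = p.2.1 ∨ e = p.2.2

noncomputable def chain (F : SimpleGraph V) (c : F.Dart) :
    {s : V} → F.Walk s c.toProd.1 → F.Dart → Set (F.Dart × F.Dart × F.Dart)
  | _, .nil, inc => {(inc, inc.symm, third F c.toProd.1 inc.symm c)}
  | s, .cons (v := t) h p, inc =>
      insert (inc, inc.symm, third F s inc.symm ⟨(s, t), h⟩) (chain F c p ⟨(s, t), h⟩)

theorem chain_nil_eq (F : SimpleGraph V) (c : F.Dart) (inc : F.Dart) :
    chain F c Walk.nil inc = {(inc, inc.symm, third F c.toProd.1 inc.symm c)} := by rw [chain]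

theorem chain_cons_eq (F : SimpleGraph V) (c : F.Dart) {s t : V} (h : F.Adj s t)
    (p : F.Walk t c.toProd.1) (inc : F.Dart) :
    chain F c (Walk.cons h p) inc =
      insert (inc, inc.symm, third F s inc.symm ⟨(s, t), h⟩) (chain F c p ⟨(s, t), h⟩) := by rw [chain]

theorem chain_valid [Finite V] {F : SimpleGraph V} (hcubic : CubicGraph F) (c : F.Dart) :
    ∀ {s : V} (q : F.Walk s c.toProd.1) (inc : F.Dart),
      q.IsPath → inc.toProd.2 = s → inc.toProd.1 ∉ q.support →
      ∀ p ∈ chain F c q inc,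
        (TriangleReplacement F).Adj p.1 p.2.1 ∧ (TriangleReplacement F).Adj p.2.1 p.2.2 ∧
          p.1 ≠ p.2.2
  | _, .nil, inc => by
    intro _ h2 h1 p hp
    rw [chain_nil_eq, Set.mem_singleton_iff] at hp
    subst hp
    obtain ⟨hmem, hne1, hne2⟩ := third_spec hcubic c.toProd.1 inc.symm c
    have hfst : (third F c.toProd.1 inc.symm c).toProd.1 = c.toProd.1 := hmem
    refine ⟨tr_adj.mpr ⟨(Dart.symm_ne inc).symm, Or.inr rfl⟩, tr_adj.mpr ⟨Ne.symm hne1, Or.inl ?_⟩, ?_⟩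
    · show inc.toProd.2 = _
      rw [h2, hfst]
    · show inc ≠ third F c.toProd.1 inc.symm c
      intro heq
      apply h1
      show inc.toProd.1 ∈ _
      rw [heq, hfst, Walk.support_nil]
      exact List.mem_singleton_self _
  | s, .cons (v := t) h p, inc => by
    intro hpath h2 h1 pp hpp
    have hs_not : s ∉ p.support := ((Walk.cons_isPath_iff _ _).mp hpath).2
    rw [chain_cons_eq, Set.mem_insert_iff] at hpp
    rcases hpp with heq | hmem
    · subst heq
      obtain ⟨hmem3, hne1, hne2⟩ := third_spec hcubic s inc.symm (⟨(s, t), h⟩ : F.Dart)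
      have hfst : (third F s inc.symm (⟨(s, t), h⟩ : F.Dart)).toProd.1 = s := hmem3
      refine ⟨tr_adj.mpr ⟨(Dart.symm_ne inc).symm, Or.inr rfl⟩, tr_adj.mpr ⟨Ne.symm hne1, Or.inl ?_⟩, ?_⟩
      · show inc.toProd.2 = _
        rw [h2, hfst]
      · show inc ≠ third F s inc.symm (⟨(s, t), h⟩ : F.Dart)
        intro heq
        apply h1
        show inc.toProd.1 ∈ _
        rw [heq, hfst, Walk.support_cons]
        exact List.mem_cons_self
    · exact chain_valid hcubic c p ⟨(s, t), h⟩ ((Walk.cons_isPath_iff _ _).mp hpath).1 rfl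
        hs_not pp hmem

theorem chain_cov_iff [Finite V] {F : SimpleGraph V} (hcubic : CubicGraph F) (c : F.Dart) :
    ∀ {s : V} (q : F.Walk s c.toProd.1) (inc : F.Dart),
      q.IsPath → c.toProd.2 ∉ q.support → inc.toProd.2 = s → inc.toProd.1 ∉ q.support →
      inc ≠ c.symm →
      ∀ e : F.Dart,
        (∃ p ∈ chain F c q inc, covered e p) ↔
          (e = inc ∨ (e.toProd.1 ∈ q.support ∧ e ≠ c))
  | _, .nil, inc => by
    intro hpath hcs h2 h1 hinc e
    obtain ⟨hmem, hne1, hne2⟩ := third_spec hcubic c.toProd.1 inc.symm c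
    have hfst : (third F c.toProd.1 inc.symm c).toProd.1 = c.toProd.1 := hmem
    have hsne : inc.symm ≠ c := fun hx => hinc (by rw [← hx, Dart.symm_symm])
    have hsmem : c.toProd.1 ∈ (Walk.nil : F.Walk c.toProd.1 c.toProd.1).support :=
      Walk.start_mem_support _
    constructor
    · rintro ⟨p, hp, hcov⟩
      rw [chain_nil_eq, Set.mem_singleton_iff] at hp
      subst hp
      have hcov' : e = inc ∨ e = inc.symm ∨ e = third F c.toProd.1 inc.symm c := hcov
      rcases hcov' with heq | heq | heq
      · exact Or.inl heq
      · refine Or.inr ⟨?_, ?_⟩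
        · rw [heq]
          show inc.toProd.2 ∈ _
          rw [h2]; exact hsmem
        · rw [heq]; exact hsne
      · refine Or.inr ⟨?_, ?_⟩
        · rw [heq, hfst]; exact hsmem
        · rw [heq]; exact hne2
    · intro hcase
      rcases hcase with heq | ⟨hfmem, hnec⟩
      · exact ⟨(inc, inc.symm, third F c.toProd.1 inc.symm c), by rw [chain_nil_eq]; rfl,
          Or.inl heq⟩
      · have hef : e.toProd.1 = c.toProd.1 := by
          rw [Walk.support_nil, List.mem_singleton] at hfmem
          exact hfmem
        have hsymm_mem : inc.symm ∈ dartAt F c.toProd.1 := by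
          show inc.toProd.2 = _
          rw [h2]
        have hc_mem : c ∈ dartAt F c.toProd.1 := rfl
        rcases dartAt_cases hcubic c.toProd.1 inc.symm c hsymm_mem hc_mem hsne e hef with
          heq | heq | heq
        · exact ⟨(inc, inc.symm, third F c.toProd.1 inc.symm c), by rw [chain_nil_eq]; rfl,
            Or.inr (Or.inl heq)⟩
        · exact absurd heq hnec
        · exact ⟨(inc, inc.symm, third F c.toProd.1 inc.symm c), by rw [chain_nil_eq]; rfl,
            Or.inr (Or.inr heq)⟩
  | s, .cons (v := t) h p, inc => by
    intro hpath hcs h2 h1 hinc e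
    have hs_not : s ∉ p.support := ((Walk.cons_isPath_iff _ _).mp hpath).2
    have hppath : p.IsPath := ((Walk.cons_isPath_iff _ _).mp hpath).1
    have hcs' : c.toProd.2 ∉ p.support := fun hx =>
      hcs (by rw [Walk.support_cons]; exact List.mem_cons_of_mem _ hx)
    have hincs : inc.toProd.1 ≠ s := fun hx =>
      h1 (by rw [Walk.support_cons, hx]; exact List.mem_cons_self)
    have hinct : inc.toProd.1 ∉ p.support := fun hx =>
      h1 (by rw [Walk.support_cons]; exact List.mem_cons_of_mem _ hx)
    have hinc'nc : (⟨(s, t), h⟩ : F.Dart) ≠ c.symm := by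
      intro hx
      apply hcs
      have hx' : c.symm = (⟨(s, t), h⟩ : F.Dart) := hx.symm
      have hcs2 : c.toProd.2 = s := by
        show c.symm.toProd.1 = s
        rw [hx']
      rw [Walk.support_cons, hcs2]
      exact List.mem_cons_self
    have hscf : s ≠ c.toProd.1 := fun hx => hs_not (hx ▸ Walk.end_mem_support p)
    obtain ⟨hmem3, hne1, hne2⟩ := third_spec hcubic s inc.symm (⟨(s, t), h⟩ : F.Dart)
    have hfst : (third F s inc.symm (⟨(s, t), h⟩ : F.Dart)).toProd.1 = s := hmem3
    have ih := chain_cov_iff hcubic c p ⟨(s, t), h⟩ hppath hcs' rfl hs_not hinc'nc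
    constructor
    · rintro ⟨pp, hpp, hcov⟩
      rw [chain_cons_eq, Set.mem_insert_iff] at hpp
      rcases hpp with heqp | hmemp
      · rw [heqp] at hcov
        have hcov' : e = inc ∨ e = inc.symm ∨ e = third F s inc.symm ⟨(s, t), h⟩ := hcov
        rcases hcov' with heq | heq | heq
        · exact Or.inl heq
        · refine Or.inr ⟨?_, ?_⟩
          · rw [heq]
            show inc.toProd.2 ∈ _
            rw [h2, Walk.support_cons]
            exact List.mem_cons_self
          · intro hx
            apply hscf
            have : e.toProd.1 = s := by rw [heq]; show inc.toProd.2 = s; exact h2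
            rw [← this, hx]
        · refine Or.inr ⟨?_, ?_⟩
          · rw [heq, hfst, Walk.support_cons]
            exact List.mem_cons_self
          · intro hx
            apply hscf
            have : e.toProd.1 = s := by rw [heq, hfst]
            rw [← this, hx]
      · rcases (ih e).mp ⟨pp, hmemp, hcov⟩ with heq | ⟨hm, hnc⟩
        · refine Or.inr ⟨?_, ?_⟩
          · rw [heq]
            show s ∈ _
            rw [Walk.support_cons]
            exact List.mem_cons_self
          · intro hx
            apply hscf
            have : e.toProd.1 = s := by rw [heq]
            rw [← this, hx]
        · exact Or.inr ⟨by rw [Walk.support_cons]; exact List.mem_cons_of_mem _ hm, hnc⟩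
    · intro hcase
      have hhead : ∀ pq, pq ∈ insert (inc, inc.symm, third F s inc.symm ⟨(s, t), h⟩)
          (chain F c p ⟨(s, t), h⟩) → pq ∈ chain F c (Walk.cons h p) inc := by
        intro pq hpq
        rw [chain_cons_eq]
        exact hpq
      rcases hcase with heq | ⟨hfmem, hnec⟩
      · exact ⟨(inc, inc.symm, third F s inc.symm ⟨(s, t), h⟩),
          hhead _ (Set.mem_insert _ _), Or.inl heq⟩
      · rw [Walk.support_cons, List.mem_cons] at hfmem
        rcases hfmem with hef | hef
        · have hsymm_mem : inc.symm ∈ dartAt F s := by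
            show inc.toProd.2 = _
            rw [h2]
          have hinc'_mem : (⟨(s, t), h⟩ : F.Dart) ∈ dartAt F s := rfl
          have hne : inc.symm ≠ (⟨(s, t), h⟩ : F.Dart) := by
            intro hx
            apply hinct
            have : inc.toProd.1 = t := by
              show inc.symm.toProd.2 = t
              rw [hx]
            rw [this]
            exact Walk.start_mem_support p
          rcases dartAt_cases hcubic s inc.symm ⟨(s, t), h⟩ hsymm_mem hinc'_mem hne e hef with
            heq | heq | heq
          · exact ⟨(inc, inc.symm, third F s inc.symm ⟨(s, t), h⟩),
            hhead _ (Set.mem_insert _ _), Or.inr (Or.inl heq)⟩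
          · obtain ⟨pp, hpp, hcov⟩ := (ih (⟨(s, t), h⟩ : F.Dart)).mpr (Or.inl rfl)
            refine ⟨pp, hhead _ (Set.mem_insert_of_mem _ hpp), ?_⟩
            rw [heq]
            exact hcov
          · exact ⟨(inc, inc.symm, third F s inc.symm ⟨(s, t), h⟩),
            hhead _ (Set.mem_insert _ _), Or.inr (Or.inr heq)⟩
        · obtain ⟨pp, hpp, hcov⟩ := (ih e).mpr (Or.inr ⟨hef, hnec⟩)
          exact ⟨pp, hhead _ (Set.mem_insert_of_mem _ hpp), hcov⟩

theorem chain_unique [Finite V] {F : SimpleGraph V} (hcubic : CubicGraph F) (c : F.Dart) :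
    ∀ {s : V} (q : F.Walk s c.toProd.1) (inc : F.Dart),
      q.IsPath → c.toProd.2 ∉ q.support → inc.toProd.2 = s → inc.toProd.1 ∉ q.support →
      inc ≠ c.symm →
      ∀ (e : F.Dart) (p1 p2 : F.Dart × F.Dart × F.Dart),
        p1 ∈ chain F c q inc → p2 ∈ chain F c q inc → covered e p1 → covered e p2 → p1 = p2
  | _, .nil, inc => by
    intro _ _ _ _ _ e p1 p2 hp1 hp2 _ _
    rw [chain_nil_eq, Set.mem_singleton_iff] at hp1 hp2
    rw [hp1, hp2]
  | s, .cons (v := t) h p, inc => by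
    intro hpath hcs h2 h1 hinc e p1 p2 hp1 hp2 hc1 hc2
    have hs_not : s ∉ p.support := ((Walk.cons_isPath_iff _ _).mp hpath).2
    have hppath : p.IsPath := ((Walk.cons_isPath_iff _ _).mp hpath).1
    have hcs' : c.toProd.2 ∉ p.support := fun hx =>
      hcs (by rw [Walk.support_cons]; exact List.mem_cons_of_mem _ hx)
    have hincs : inc.toProd.1 ≠ s := fun hx =>
      h1 (by rw [Walk.support_cons, hx]; exact List.mem_cons_self)
    have hinct : inc.toProd.1 ∉ p.support := fun hx =>
      h1 (by rw [Walk.support_cons]; exact List.mem_cons_of_mem _ hx)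
    have hinc'nc : (⟨(s, t), h⟩ : F.Dart) ≠ c.symm := by
      intro hx
      apply hcs
      have hx' : c.symm = (⟨(s, t), h⟩ : F.Dart) := hx.symm
      have hcs2 : c.toProd.2 = s := by
        show c.symm.toProd.1 = s
        rw [hx']
      rw [Walk.support_cons, hcs2]
      exact List.mem_cons_self
    obtain ⟨hmem3, hne1, hne2⟩ := third_spec hcubic s inc.symm (⟨(s, t), h⟩ : F.Dart)
    have hfst : (third F s inc.symm (⟨(s, t), h⟩ : F.Dart)).toProd.1 = s := hmem3
    have ih_cov := chain_cov_iff hcubic c p ⟨(s, t), h⟩ hppath hcs' rfl hs_not hinc'nc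
    have ih_unique := chain_unique hcubic c p ⟨(s, t), h⟩ hppath hcs' rfl hs_not hinc'nc
    have key : ∀ pp, pp ∈ chain F c p (⟨(s, t), h⟩ : F.Dart) →
        covered e (inc, inc.symm, third F s inc.symm ⟨(s, t), h⟩) → covered e pp → False := by
      intro pp hpp hcovh hcovt
      have hchar := (ih_cov e).mp ⟨pp, hpp, hcovt⟩
      have hcovh' : e = inc ∨ e = inc.symm ∨ e = third F s inc.symm ⟨(s, t), h⟩ := hcovh
      rcases hcovh' with heq | heq | heq
      · rcases hchar with heq2 | ⟨hm, _⟩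
        · apply hincs
          rw [← heq, heq2]
        · apply hinct
          rw [← heq]; exact hm
      · rcases hchar with heq2 | ⟨hm, _⟩
        · apply hinct
          have : inc.toProd.1 = t := by
            show inc.symm.toProd.2 = t
            rw [← heq, heq2]
          rw [this]
          exact Walk.start_mem_support p
        · apply hs_not
          have : e.toProd.1 = s := by rw [heq]; show inc.toProd.2 = s; exact h2
          rw [← this]; exact hm
      · rcases hchar with heq2 | ⟨hm, _⟩
        · exact hne2 (by rw [← heq, heq2])
        · apply hs_not
          have : e.toProd.1 = s := by rw [heq, hfst]
          rw [← this]; exact hm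
    rw [chain_cons_eq, Set.mem_insert_iff] at hp1 hp2
    rcases hp1 with he1 | hm1 <;> rcases hp2 with he2 | hm2
    · rw [he1, he2]
    · exact absurd (key p2 hm2 (he1 ▸ hc1) hc2) not_false
    · exact absurd (key p1 hm1 (he2 ▸ hc2) hc1) not_false
    · exact ih_unique e p1 p2 hm1 hm2 hc1 hc2

end AuxLambda


theorem main_lemma {V : Type*} [Fintype V] (F : SimpleGraph V)
    (hcubic : CubicGraph F) (hconn : KConnected 2 F)
    (a b : F.Dart) (ha1 : a.toProd.1 = b.toProd.1) (hne : a ≠ b) :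
    ∃ P : Set (F.Dart × F.Dart × F.Dart),
      IsLambdaFactor (TriangleReplacement F) P ∧ (a, b, b.symm) ∈ P ∧
      ∃ p ∈ P, (TriangleReplacement F).Adj p.1 p.2.2 := by
  classical
  have hfin : Finite F.Dart := Finite.of_injective _ Dart.toProd_injective
  obtain ⟨hd1, hda, hdb⟩ := third_spec hcubic b.toProd.1 a b
  set d : F.Dart := third F b.toProd.1 a b with hddef
  have hamem : a ∈ dartAt F b.toProd.1 := ha1
  have hbmem : b ∈ dartAt F b.toProd.1 := rfl
  have hcases_u := dartAt_cases hcubic b.toProd.1 a b hamem hbmem hne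
  have hd1' : d.toProd.1 = b.toProd.1 := hd1
  -- the three neighbors of u = b.toProd.1
  have hax : F.Adj b.toProd.1 d.toProd.2 := by have := d.adj; rwa [hd1'] at this
  have haw : F.Adj b.toProd.1 b.toProd.2 := b.adj
  have haz : F.Adj b.toProd.1 a.toProd.2 := by have := a.adj; rwa [ha1] at this
  have dart_eq_of_snd : ∀ e1 e2 : F.Dart, e1.toProd.1 = b.toProd.1 → e2.toProd.1 = b.toProd.1 →
      e1.toProd.2 = e2.toProd.2 → e1 = e2 := by
    intro e1 e2 h1 h2 h3
    exact Dart.ext _ _ (Prod.ext (h1.trans h2.symm) h3)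
  have hxw : d.toProd.2 ≠ b.toProd.2 := fun h => hdb (dart_eq_of_snd d b hd1' rfl h)
  have hxz : d.toProd.2 ≠ a.toProd.2 := fun h => hda (dart_eq_of_snd d a hd1' ha1 h)
  have hwz : b.toProd.2 ≠ a.toProd.2 := fun h => (hne (dart_eq_of_snd a b ha1 rfl h.symm)).elim
  obtain ⟨q, hqpath, hqu, y, hyu, hyq⟩ := exists_good_path F hcubic hconn
    b.toProd.1 d.toProd.2 b.toProd.2 a.toProd.2 hax haw haz hxw hxz hwz
  -- view q as a walk into (b.symm).toProd.1
  have hq : ∀ m, m ∈ q.support ↔ m ∈ q.support := fun _ => Iff.rfl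
  -- chain invariants
  have hinv2 : (b.symm).toProd.2 ∉ q.support := hqu
  have hinv4 : d.toProd.1 ∉ q.support := by rw [hd1']; exact hqu
  have hinv5 : d ≠ (b.symm).symm := by rw [Dart.symm_symm]; exact hdb
  have covchain := chain_cov_iff hcubic b.symm q d hqpath hinv2 rfl hinv4 hinv5
  have validchain := chain_valid hcubic b.symm q d hqpath rfl hinv4
  have uniqchain := chain_unique hcubic b.symm q d hqpath hinv2 rfl hinv4 hinv5
  -- triangle triples
  set td1 : V → F.Dart := fun v => third F v b b with htd1def
  set td2 : V → F.Dart := fun v => third F v (td1 v) (td1 v) with htd2def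
  set td3 : V → F.Dart := fun v => third F v (td1 v) (td2 v) with htd3def
  have ht1 : ∀ v, (td1 v).toProd.1 = v := fun v => (third_spec hcubic v b b).1
  have ht2 : ∀ v, (td2 v).toProd.1 = v := fun v => (third_spec hcubic v (td1 v) (td1 v)).1
  have ht3 : ∀ v, (td3 v).toProd.1 = v := fun v => (third_spec hcubic v (td1 v) (td2 v)).1
  have ht21 : ∀ v, td2 v ≠ td1 v := fun v => (third_spec hcubic v (td1 v) (td1 v)).2.1
  have ht31 : ∀ v, td3 v ≠ td1 v := fun v => (third_spec hcubic v (td1 v) (td2 v)).2.1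
  have ht32 : ∀ v, td3 v ≠ td2 v := fun v => (third_spec hcubic v (td1 v) (td2 v)).2.2
  have tri_cases : ∀ (v : V) (e : F.Dart), e.toProd.1 = v →
      e = td1 v ∨ e = td2 v ∨ e = td3 v := by
    intro v e hev
    exact dartAt_cases hcubic v (td1 v) (td2 v) (ht1 v) (ht2 v) (Ne.symm (ht21 v)) e hev
  set Tri : Set (F.Dart × F.Dart × F.Dart) :=
    {p | ∃ v : V, v ≠ b.toProd.1 ∧ v ∉ q.support ∧ p = (td1 v, td2 v, td3 v)} with hTridef
  set P : Set (F.Dart × F.Dart × F.Dart) :=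
    insert (a, b, b.symm) (chain F b.symm q d ∪ Tri) with hPdef
  have hLP : (a, b, b.symm) ∈ P := Set.mem_insert _ _
  have hchainP : ∀ p ∈ chain F b.symm q d, p ∈ P := fun p hp =>
    Set.mem_insert_of_mem _ (Set.mem_union_left _ hp)
  have hTriP : ∀ p ∈ Tri, p ∈ P := fun p hp =>
    Set.mem_insert_of_mem _ (Set.mem_union_right _ hp)
  have h_u_ne_w : b.toProd.1 ≠ b.toProd.2 := haw.ne
  have hwsup : b.toProd.2 ∈ q.support := Walk.end_mem_support q
  have hd_ne_bsymm : d ≠ b.symm := by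
    intro h
    apply h_u_ne_w
    rw [← hd1', h]
    rfl
  -- exclusion lemma for Tri
  have ENotTri : ∀ (e : F.Dart) (p : F.Dart × F.Dart × F.Dart), p ∈ Tri → covered e p →
      e.toProd.1 ≠ b.toProd.1 ∧ e.toProd.1 ∉ q.support ∧
        p = (td1 e.toProd.1, td2 e.toProd.1, td3 e.toProd.1) := by
    intro e p hp hcov
    obtain ⟨v, hv1, hv2, rfl⟩ := hp
    have hev : e.toProd.1 = v := by
      rcases hcov with h | h | h
      · rw [h]; exact ht1 v
      · rw [h]; exact ht2 v
      · rw [h]; exact ht3 v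
    rw [hev]
    exact ⟨hv1, hv2, rfl⟩
  refine ⟨P, ⟨?_, ?_⟩, hLP, ?_⟩
  · -- all triples are valid 3-paths
    intro p hp
    rcases Set.mem_insert_iff.mp hp with heq | hp'
    · subst heq
      refine ⟨tr_adj.mpr ⟨hne, Or.inl ha1⟩, tr_adj.mpr ⟨(Dart.symm_ne b).symm, Or.inr rfl⟩, ?_⟩
      show a ≠ b.symm
      intro h
      apply h_u_ne_w
      rw [← ha1, h]
      rfl
    · rcases hp' with hp' | hp'
      · exact validchain p hp'
      · obtain ⟨v, _, _, rfl⟩ := hp'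
        refine ⟨tr_adj.mpr ⟨Ne.symm (ht21 v), Or.inl ((ht1 v).trans (ht2 v).symm)⟩,
          tr_adj.mpr ⟨Ne.symm (ht32 v), Or.inl ((ht2 v).trans (ht3 v).symm)⟩, Ne.symm (ht31 v)⟩
  · -- exact cover
    intro e
    by_cases he_u : e.toProd.1 = b.toProd.1
    · -- tail of e is u
      have he_ns : e.toProd.1 ∉ q.support := by rw [he_u]; exact hqu
      rcases hcases_u e he_u with heq | heq | heq
      · -- e = a
        refine ⟨(a, b, b.symm), ⟨hLP, Or.inl heq⟩, ?_⟩
        rintro p' ⟨hp', hcov'⟩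
        rcases Set.mem_insert_iff.mp hp' with h | h
        · rw [h]
        · rcases h with h | h
          · rcases (covchain e).mp ⟨p', h, hcov'⟩ with h2 | ⟨h2, _⟩
            · exact absurd (heq ▸ h2 : a = d) (Ne.symm hda)
            · exact absurd h2 he_ns
          · exact absurd he_u (ENotTri e p' h hcov').1
      · -- e = b
        refine ⟨(a, b, b.symm), ⟨hLP, Or.inr (Or.inl heq)⟩, ?_⟩
        rintro p' ⟨hp', hcov'⟩
        rcases Set.mem_insert_iff.mp hp' with h | h
        · rw [h]
        · rcases h with h | h
          · rcases (covchain e).mp ⟨p', h, hcov'⟩ with h2 | ⟨h2, _⟩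
            · exact absurd (heq ▸ h2 : b = d) (Ne.symm hdb)
            · exact absurd h2 he_ns
          · exact absurd he_u (ENotTri e p' h hcov').1
      · -- e = d
        obtain ⟨p0, hp0, hcov0⟩ := (covchain e).mpr (Or.inl heq)
        refine ⟨p0, ⟨hchainP p0 hp0, hcov0⟩, ?_⟩
        rintro p' ⟨hp', hcov'⟩
        rcases Set.mem_insert_iff.mp hp' with h | h
        · exfalso
          rw [h] at hcov'
          rcases (hcov' : e = a ∨ e = b ∨ e = b.symm) with h2 | h2 | h2
          · exact hda (by rw [hddef, ← heq]; exact h2)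
          · exact hdb (by rw [hddef, ← heq]; exact h2)
          · exact hd_ne_bsymm (by rw [hddef, ← heq]; exact h2)
        · rcases h with h | h
          · exact uniqchain e p' p0 h hp0 hcov' hcov0
          · exact absurd he_u (ENotTri e p' h hcov').1
    · by_cases he_s : e.toProd.1 ∈ q.support
      · by_cases he_c : e = b.symm
        · -- e = b.symm, covered by L
          refine ⟨(a, b, b.symm), ⟨hLP, Or.inr (Or.inr he_c)⟩, ?_⟩
          rintro p' ⟨hp', hcov'⟩
          rcases Set.mem_insert_iff.mp hp' with h | h
          · rw [h]
          · exfalso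
            rcases h with h | h
            · rcases (covchain e).mp ⟨p', h, hcov'⟩ with h2 | ⟨_, h3⟩
              · exact hd_ne_bsymm (h2 ▸ he_c)
              · exact h3 he_c
            · exact (ENotTri e p' h hcov').2.1 he_s
        · -- e covered by chain
          obtain ⟨p0, hp0, hcov0⟩ := (covchain e).mpr (Or.inr ⟨he_s, he_c⟩)
          refine ⟨p0, ⟨hchainP p0 hp0, hcov0⟩, ?_⟩
          rintro p' ⟨hp', hcov'⟩
          rcases Set.mem_insert_iff.mp hp' with h | h
          · exfalso
            rw [h] at hcov'
            rcases (hcov' : e = a ∨ e = b ∨ e = b.symm) with h2 | h2 | h2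
            · exact he_u (by rw [h2, ha1])
            · exact he_u (by rw [h2])
            · exact he_c h2
          · rcases h with h | h
            · exact uniqchain e p' p0 h hp0 hcov' hcov0
            · exact absurd he_s (fun _ => (ENotTri e p' h hcov').2.1 he_s)
      · -- e in a leftover triangle
        have hTmem : (td1 e.toProd.1, td2 e.toProd.1, td3 e.toProd.1) ∈ Tri :=
          ⟨e.toProd.1, he_u, he_s, rfl⟩
        refine ⟨(td1 e.toProd.1, td2 e.toProd.1, td3 e.toProd.1),
          ⟨hTriP _ hTmem, tri_cases e.toProd.1 e rfl⟩, ?_⟩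
        rintro p' ⟨hp', hcov'⟩
        rcases Set.mem_insert_iff.mp hp' with h | h
        · exfalso
          rw [h] at hcov'
          rcases (hcov' : e = a ∨ e = b ∨ e = b.symm) with h2 | h2 | h2
          · exact he_u (by rw [h2, ha1])
          · exact he_u (by rw [h2])
          · apply he_s
            have : e.toProd.1 = b.toProd.2 := by rw [h2]; rfl
            rw [this]
            exact hwsup
        · rcases h with h | h
          · exfalso
            rcases (covchain e).mp ⟨p', h, hcov'⟩ with h2 | ⟨h2, _⟩
            · exact he_u (by rw [h2, hd1'])
            · exact he_s h2
          · exact (ENotTri e p' h hcov').2.2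
  · -- a triangle component exists
    refine ⟨(td1 y, td2 y, td3 y), hTriP _ ⟨y, hyu, hyq, rfl⟩, ?_⟩
    exact tr_adj.mpr ⟨Ne.symm (ht31 y), Or.inl ((ht1 y).trans (ht3 y).symm)⟩

/-- if `F` is a cubic 2-connected graph, `G = F^Δ`, and `L = a-b-c` is a
3-vertex path in `G` whose vertices do not induce a triangle, then `G` has a
`Λ`-factor containing `L` at least one of whose components induces a triangle in `G`. -/
theorem stmt_3 {V : Type*} [Fintype V] (F : SimpleGraph V)
    (hcubic : CubicGraph F) (hconn : KConnected 2 F)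
    (a b c : F.Dart)
    (hab : (TriangleReplacement F).Adj a b) (hbc : (TriangleReplacement F).Adj b c)
    (hac : a ≠ c) (htri : ¬ (TriangleReplacement F).Adj a c) :
    ∃ P : Set (F.Dart × F.Dart × F.Dart),
      IsLambdaFactor (TriangleReplacement F) P ∧
      ((a, b, c) ∈ P ∨ (c, b, a) ∈ P) ∧
      ∃ p ∈ P, (TriangleReplacement F).Adj p.1 p.2.2 := by
  classical
  obtain ⟨hab_ne, hab2⟩ := hab
  obtain ⟨hbc_ne, hbc2⟩ := hbc
  rcases hab2 with h1 | h1 <;> rcases hbc2 with h2 | h2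
  · exact absurd (tr_adj.mpr ⟨hac, Or.inl (h1.trans h2)⟩) htri
  · -- a-b same tail, c = b.symm
    obtain ⟨P, hP, hL, hp⟩ := main_lemma F hcubic hconn a b h1 hab_ne
    subst h2
    exact ⟨P, hP, Or.inl hL, hp⟩
  · -- b = a.symm, b-c same tail
    have ha : a = b.symm := by rw [h1, Dart.symm_symm]
    obtain ⟨P, hP, hL, hp⟩ := main_lemma F hcubic hconn c b h2.symm (Ne.symm hbc_ne)
    rw [← ha] at hL
    exact ⟨P, hP, Or.inr hL, hp⟩
  · exfalso
    apply hac
    rw [h2, h1, Dart.symm_symm]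
end

section
/- Let A be a graph such that: (c1) A is connected; (c2) every vertex of A has degree at most 3; (c3) every vertex of A of degree 2 or 3 belongs to exactly one triangle of A; and (c4) A has exactly three vertices of degree 1. Then A has no Λ-factor. -/
open SimpleGraph

/-- `t` is a triangle of `G`: a set of three pairwise adjacent vertices. -/
def IsTriangleSet {V : Type*} (G : SimpleGraph V) (t : Finset V) : Prop :=
  t.card = 3 ∧ ∀ u ∈ t, ∀ w ∈ t, u ≠ w → G.Adj u w

/-- if `A` is a connected graph of maximum degree at most 3 in which
every vertex of degree 2 or 3 lies in exactly one triangle and which has exactly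
three vertices of degree 1, then `A` has no `Λ`-factor. -/
theorem stmt_11 {V : Type*} [Fintype V] (A : SimpleGraph V)
    (hc1 : A.Connected)
    (hc2 : ∀ v : V, (A.neighborSet v).ncard ≤ 3)
    (hc3 : ∀ v : V, (A.neighborSet v).ncard = 2 ∨ (A.neighborSet v).ncard = 3 →
      ∃! t : Finset V, IsTriangleSet A t ∧ v ∈ t)
    (hc4 : ({v : V | (A.neighborSet v).ncard = 1}).ncard = 3) :
    ¬ HasLambdaFactor A := by
    classical
  rintro ⟨P, hPadj, hPuniq⟩
  set f : V → V × V × V := fun v => (hPuniq v).choose with hfdef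
  have hfP : ∀ v, f v ∈ P := fun v => (hPuniq v).choose_spec.1.1
  have hfmem : ∀ v, v = (f v).1 ∨ v = (f v).2.1 ∨ v = (f v).2.2 :=
    fun v => (hPuniq v).choose_spec.1.2
  have hfuniq : ∀ v p, p ∈ P → (v = p.1 ∨ v = p.2.1 ∨ v = p.2.2) → p = f v :=
    fun v p hp hv => (hPuniq v).choose_spec.2 p ⟨hp, hv⟩
  have hdisj : ∀ v (p q : V × V × V), p ∈ P → q ∈ P →
      (v = p.1 ∨ v = p.2.1 ∨ v = p.2.2) → (v = q.1 ∨ v = q.2.1 ∨ v = q.2.2) → p = q := by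
    intro v p q hp hq hvp hvq
    rw [hfuniq v p hp hvp, hfuniq v q hq hvq]
  have hcardV : 3 ≤ Fintype.card V := by
    calc 3 = ({v : V | (A.neighborSet v).ncard = 1}).ncard := hc4.symm
    _ ≤ (Set.univ : Set V).ncard := Set.ncard_le_ncard (Set.subset_univ _) Set.finite_univ
    _ = Fintype.card V := by rw [Set.ncard_univ, Nat.card_eq_fintype_card]
  have hdegpos : ∀ v : V, 1 ≤ (A.neighborSet v).ncard := by
    intro v
    obtain ⟨w, hw⟩ := Fintype.exists_ne_of_one_lt_card (by omega) v
    obtain ⟨pw⟩ := hc1.preconnected v w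
    cases pw with
    | nil => exact absurd rfl hw.symm
    | @cons _ u _ h pth =>
      exact (Set.ncard_pos (Set.toFinite _)).mpr ⟨u, h⟩
  have htri_deg : ∀ t : Finset V, IsTriangleSet A t → ∀ v ∈ t, 2 ≤ (A.neighborSet v).ncard := by
    intro t ht v hv
    have hcarde : 1 < (t.erase v).card := by
      rw [Finset.card_erase_of_mem hv, ht.1]
      norm_num
    obtain ⟨a, ha, b, hb, hab⟩ := Finset.one_lt_card.mp hcarde
    have hva : A.Adj v a :=
      ht.2 v hv a (Finset.mem_of_mem_erase ha) (Ne.symm (Finset.ne_of_mem_erase ha))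
    have hvb : A.Adj v b :=
      ht.2 v hv b (Finset.mem_of_mem_erase hb) (Ne.symm (Finset.ne_of_mem_erase hb))
    have hsub : ({a, b} : Set V) ⊆ A.neighborSet v := by
      intro w hw
      simp only [Set.mem_insert_iff, Set.mem_singleton_iff] at hw
      rcases hw with rfl | rfl
      · exact hva
      · exact hvb
    calc 2 = ({a, b} : Set V).ncard := (Set.ncard_pair hab).symm
    _ ≤ _ := Set.ncard_le_ncard hsub (Set.toFinite _)
  have h23 : ∀ v, 2 ≤ (A.neighborSet v).ncard →
      (A.neighborSet v).ncard = 2 ∨ (A.neighborSet v).ncard = 3 := by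
    intro v hv; have := hc2 v; omega
  set tri : V → Finset V := fun v =>
    if h : 2 ≤ (A.neighborSet v).ncard then (hc3 v (h23 v h)).choose else ∅ with htridef
  have htri_spec : ∀ v, 2 ≤ (A.neighborSet v).ncard →
      (IsTriangleSet A (tri v) ∧ v ∈ tri v) ∧
      ∀ t, IsTriangleSet A t → v ∈ t → t = tri v := by
    intro v hv
    simp only [htridef, dif_pos hv]
    exact ⟨(hc3 v (h23 v hv)).choose_spec.1,
      fun t h1 h2 => (hc3 v (h23 v hv)).choose_spec.2 t ⟨h1, h2⟩⟩
  -- the set of paths as a finset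
  set Pfin : Finset (V × V × V) := Finset.univ.image f with hPfindef
  have hPfinP : ∀ p ∈ Pfin, p ∈ P := by
    intro p hp
    obtain ⟨u, -, rfl⟩ := Finset.mem_image.mp hp
    exact hfP u
  have hcount1 : Fintype.card V = 3 * Pfin.card := by
    rw [← Finset.card_univ,
      Finset.card_eq_sum_card_fiberwise
        (fun x _ => Finset.mem_image_of_mem f (Finset.mem_univ x))]
    have hfib : ∀ p ∈ Pfin, (Finset.univ.filter (fun v => f v = p)).card = 3 := by
      intro p hp
      have hpP := hPfinP p hp
      have hfibeq : Finset.univ.filter (fun v => f v = p) = {p.1, p.2.1, p.2.2} := by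
        ext v
        simp only [Finset.mem_filter, Finset.mem_univ, true_and, Finset.mem_insert,
          Finset.mem_singleton]
        constructor
        · intro h; rw [← h]; exact hfmem v
        · intro h; exact (hfuniq v p hpP h).symm
      obtain ⟨h1, h2, h3⟩ := hPadj p hpP
      rw [hfibeq, Finset.card_insert_of_notMem (by simp [h1.ne, h3]),
        Finset.card_insert_of_notMem (by simp [h2.ne]), Finset.card_singleton]
    rw [Finset.sum_congr rfl hfib, Finset.sum_const, smul_eq_mul, mul_comm]
  -- the set of triangles as a finset
  set Tfin : Finset (Finset V) := Finset.univ.filter (fun t => IsTriangleSet A t) with hTfindef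
  set s : Finset V := Finset.univ.filter (fun v => 2 ≤ (A.neighborSet v).ncard) with hsdef
  have hmaps : ∀ v ∈ s, tri v ∈ Tfin := by
    intro v hv
    have hv2 := (Finset.mem_filter.mp hv).2
    exact Finset.mem_filter.mpr ⟨Finset.mem_univ _, (htri_spec v hv2).1.1⟩
  have hcount2 : s.card = 3 * Tfin.card := by
    rw [Finset.card_eq_sum_card_fiberwise hmaps]
    have hfib : ∀ t ∈ Tfin, (s.filter (fun v => tri v = t)).card = 3 := by
      intro t ht
      have htT := (Finset.mem_filter.mp ht).2
      have hfibeq : s.filter (fun v => tri v = t) = t := by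
        ext v
        simp only [Finset.mem_filter, hsdef, Finset.mem_univ, true_and]
        constructor
        · rintro ⟨hv2, rfl⟩
          exact (htri_spec v hv2).1.2
        · intro hvt
          have hv2 := htri_deg t htT v hvt
          exact ⟨hv2, ((htri_spec v hv2).2 t htT hvt).symm⟩
      rw [hfibeq, htT.1]
    rw [Finset.sum_congr rfl hfib, Finset.sum_const, smul_eq_mul, mul_comm]
  have hLf : (Finset.univ.filter (fun v => (A.neighborSet v).ncard = 1)).card = 3 := by
    have hset : {v : V | (A.neighborSet v).ncard = 1} =
        ↑(Finset.univ.filter (fun v => (A.neighborSet v).ncard = 1)) := by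
      ext v; simp
    rw [hset, Set.ncard_coe_finset] at hc4
    exact hc4
  have hseq : Finset.univ.filter (fun v => ¬ (A.neighborSet v).ncard = 1) = s := by
    rw [hsdef]
    apply Finset.filter_congr
    intro v _
    have := hdegpos v
    constructor
    · intro h; omega
    · intro h; omega
  have hsplit := Finset.card_filter_add_card_filter_not
    (s := (Finset.univ : Finset V)) (p := fun v => (A.neighborSet v).ncard = 1)
  rw [hseq, hLf, Finset.card_univ] at hsplit
  have hlt : Tfin.card < Pfin.card := by omega
  -- pigeonhole on middles
  have hmiddeg : ∀ p ∈ P, 2 ≤ (A.neighborSet p.2.1).ncard := by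
    intro p hpP
    obtain ⟨h1, h2, h3⟩ := hPadj p hpP
    have hsub : ({p.1, p.2.2} : Set V) ⊆ A.neighborSet p.2.1 := by
      intro w hw
      simp only [Set.mem_insert_iff, Set.mem_singleton_iff] at hw
      rcases hw with rfl | rfl
      · exact h1.symm
      · exact h2
    calc 2 = ({p.1, p.2.2} : Set V).ncard := (Set.ncard_pair h3).symm
    _ ≤ _ := Set.ncard_le_ncard hsub (Set.toFinite _)
  have hmid : ∀ p ∈ Pfin, tri p.2.1 ∈ Tfin := by
    intro p hp
    exact Finset.mem_filter.mpr ⟨Finset.mem_univ _,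
      (htri_spec _ (hmiddeg p (hPfinP p hp))).1.1⟩
  obtain ⟨p, hp, q, hq, hpq, heq⟩ := Finset.exists_ne_map_eq_of_card_lt_of_maps_to hlt hmid
  have hpP := hPfinP p hp
  have hqP := hPfinP q hq
  obtain ⟨hp1, hp2, hp3⟩ := hPadj p hpP
  obtain ⟨hq1, hq2, hq3⟩ := hPadj q hqP
  -- x, y : the two middles in the same triangle t
  have hxy : p.2.1 ≠ q.2.1 := by
    intro h
    exact hpq (hdisj p.2.1 p q hpP hqP (Or.inr (Or.inl rfl)) (Or.inr (Or.inl h)))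
  have htp := (htri_spec p.2.1 (hmiddeg p hpP)).1
  have htq := (htri_spec q.2.1 (hmiddeg q hqP)).1
  set t : Finset V := tri p.2.1 with htdef
  have htx : p.2.1 ∈ t := htp.2
  have hty : q.2.1 ∈ t := by rw [heq]; exact htq.2
  have htT : IsTriangleSet A t := htp.1
  -- get the third vertex z
  have hzex : (t \ {p.2.1, q.2.1}).Nonempty := by
    rw [← Finset.card_pos]
    have h1 := Finset.le_card_sdiff ({p.2.1, q.2.1} : Finset V) t
    have h2 : ({p.2.1, q.2.1} : Finset V).card ≤ 2 :=
      (Finset.card_insert_le _ _).trans (by simp)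
    have h3 := htT.1
    omega
  obtain ⟨z, hz⟩ := hzex
  obtain ⟨hzt, hzne⟩ := Finset.mem_sdiff.mp hz
  simp only [Finset.mem_insert, Finset.mem_singleton, not_or] at hzne
  obtain ⟨hzx, hzy⟩ := hzne
  have hAxy : A.Adj p.2.1 q.2.1 := htT.2 _ htx _ hty hxy
  have hAxz : A.Adj p.2.1 z := htT.2 _ htx _ hzt (Ne.symm hzx)
  have hAyz : A.Adj q.2.1 z := htT.2 _ hty _ hzt (Ne.symm hzy)
  -- endpoints of p avoid y
  have hay : p.1 ≠ q.2.1 := by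
    intro h
    exact hpq (hdisj q.2.1 p q hpP hqP (Or.inl h.symm) (Or.inr (Or.inl rfl)))
  have hby : p.2.2 ≠ q.2.1 := by
    intro h
    exact hpq (hdisj q.2.1 p q hpP hqP (Or.inr (Or.inr h.symm)) (Or.inr (Or.inl rfl)))
  -- z lies on p
  have hz_ab : z = p.1 ∨ z = p.2.2 := by
    by_contra hcon
    push_neg at hcon
    obtain ⟨hza, hzb⟩ := hcon
    have hsub : ({z, p.1, p.2.2} : Set V) ⊆ A.neighborSet p.2.1 \ {q.2.1} := by
      intro w hw
      simp only [Set.mem_insert_iff, Set.mem_singleton_iff] at hw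
      rcases hw with rfl | rfl | rfl
      · exact ⟨hAxz, by simpa using hzy⟩
      · exact ⟨hp1.symm, by simpa using hay⟩
      · exact ⟨hp2, by simpa using hby⟩
    have h3 : ({z, p.1, p.2.2} : Set V).ncard = 3 := by
      rw [Set.ncard_insert_of_notMem (by simp [hza, hzb]) (Set.toFinite _),
        Set.ncard_pair hp3]
    have h2 : (A.neighborSet p.2.1 \ {q.2.1}).ncard ≤ 2 := by
      have hlt2 := Set.ncard_diff_singleton_lt_of_mem
        (show q.2.1 ∈ A.neighborSet p.2.1 from hAxy) (Set.toFinite _)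
      have := hc2 p.2.1
      omega
    have := Set.ncard_le_ncard hsub (Set.toFinite _)
    omega
  have hzp : z = p.1 ∨ z = p.2.1 ∨ z = p.2.2 := by
    rcases hz_ab with h | h
    · exact Or.inl h
    · exact Or.inr (Or.inr h)
  -- endpoints of q avoid x and z, giving 4 neighbors of y: contradiction
  have hcx : q.1 ≠ p.2.1 := by
    intro h
    exact hpq (hdisj q.1 p q hpP hqP (Or.inr (Or.inl h)) (Or.inl rfl))
  have hdx : q.2.2 ≠ p.2.1 := by
    intro h
    exact hpq (hdisj q.2.2 p q hpP hqP (Or.inr (Or.inl h)) (Or.inr (Or.inr rfl)))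
  have hcz : q.1 ≠ z := by
    intro h
    exact hpq (hdisj z p q hpP hqP hzp (Or.inl h.symm))
  have hdz : q.2.2 ≠ z := by
    intro h
    exact hpq (hdisj z p q hpP hqP hzp (Or.inr (Or.inr h.symm)))
  have hsub : ({q.1, q.2.2, p.2.1, z} : Set V) ⊆ A.neighborSet q.2.1 := by
    intro w hw
    simp only [Set.mem_insert_iff, Set.mem_singleton_iff] at hw
    rcases hw with rfl | rfl | rfl | rfl
    · exact hq1.symm
    · exact hq2
    · exact hAxy.symm
    · exact hAyz
  have h4 : ({q.1, q.2.2, p.2.1, z} : Set V).ncard = 4 := by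
    rw [Set.ncard_insert_of_notMem (by simp [hq3, hcx, hcz]) (Set.toFinite _),
      Set.ncard_insert_of_notMem (by simp [hdx, hdz]) (Set.toFinite _),
      Set.ncard_pair (Ne.symm hzx)]
  have hle := Set.ncard_le_ncard hsub (Set.toFinite _)
  have := hc2 q.2.1
  omega
end

section
/- Let F be a cubic 2-connected graph and let G = F^Δ be the graph obtained from F by replacing each vertex of F by a triangle. Then for every set E of two edges of G, the graph G − E (obtained from G by deleting the edges of E) has a Λ-factor. -/
open SimpleGraph

section Aux


variable {V : Type*} {F : SimpleGraph V}

def MemT {α : Type*} (d : α) (q : α × α × α) : Prop := d = q.1 ∨ d = q.2.1 ∨ d = q.2.2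

theorem assemble {α : Type*} (H : SimpleGraph α) {ι : Type*} (D : ι → Set α)
    (P : ι → Set (α × α × α))
    (hpart : ∀ d, ∃! i, d ∈ D i)
    (hadj : ∀ i, ∀ q ∈ P i, H.Adj q.1 q.2.1 ∧ H.Adj q.2.1 q.2.2 ∧ q.1 ≠ q.2.2)
    (hcov : ∀ i, ∀ d ∈ D i, ∃! q, q ∈ P i ∧ MemT d q)
    (hsub : ∀ i, ∀ q ∈ P i, q.1 ∈ D i ∧ q.2.1 ∈ D i ∧ q.2.2 ∈ D i) :
    ∃ Q : Set (α × α × α), (∀ p ∈ Q, H.Adj p.1 p.2.1 ∧ H.Adj p.2.1 p.2.2 ∧ p.1 ≠ p.2.2) ∧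
      ∀ v : α, ∃! p : α × α × α, p ∈ Q ∧ (v = p.1 ∨ v = p.2.1 ∨ v = p.2.2) := by
  refine ⟨⋃ i, P i, fun q hq => ?_, fun d => ?_⟩
  · obtain ⟨i, hi⟩ := Set.mem_iUnion.1 hq; exact hadj i q hi
  · obtain ⟨i, hdi, hu⟩ := hpart d
    obtain ⟨q, ⟨hqP, hqm⟩, hq2⟩ := hcov i d hdi
    refine ⟨q, ⟨Set.mem_iUnion.2 ⟨i, hqP⟩, hqm⟩, ?_⟩
    rintro q' ⟨hq', hm'⟩
    obtain ⟨i', hi'⟩ := Set.mem_iUnion.1 hq'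
    have hd' : d ∈ D i' := by
      obtain ⟨h1, h2, h3⟩ := hsub i' q' hi'
      rcases hm' with h | h | h <;> (subst h; assumption)
    have := hu i' hd'
    subst this
    exact hq2 q' ⟨hi', hm'⟩

theorem dart_snd_ne_fst (d : F.Dart) : d.snd ≠ d.fst := d.adj.ne'

theorem dart_symm_ne (d : F.Dart) : d.symm ≠ d := by
  intro h
  have : d.symm.fst = d.fst := by rw [h]
  exact d.adj.ne' this

theorem three_darts (hcubic : CubicGraph F) (u : V) :
    ∃ p q r : F.Dart, p.fst = u ∧ q.fst = u ∧ r.fst = u ∧ p ≠ q ∧ p ≠ r ∧ q ≠ r ∧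
      ∀ d : F.Dart, d.fst = u → d = p ∨ d = q ∨ d = r := by
  obtain ⟨a, b, c, hab, hac, hbc, hset⟩ := Set.ncard_eq_three.1 (hcubic u)
  have ha : F.Adj u a := by
    have : a ∈ F.neighborSet u := by rw [hset]; exact Or.inl rfl
    exact this
  have hb : F.Adj u b := by
    have : b ∈ F.neighborSet u := by rw [hset]; exact Or.inr (Or.inl rfl)
    exact this
  have hc : F.Adj u c := by
    have : c ∈ F.neighborSet u := by rw [hset]; exact Or.inr (Or.inr rfl)
    exact this
  refine ⟨⟨(u, a), ha⟩, ⟨(u, b), hb⟩, ⟨(u, c), hc⟩, rfl, rfl, rfl, ?_, ?_, ?_, ?_⟩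
  · intro h; exact hab (congrArg (fun d => d.snd) h)
  · intro h; exact hac (congrArg (fun d => d.snd) h)
  · intro h; exact hbc (congrArg (fun d => d.snd) h)
  · intro d hd
    have hmem : d.snd ∈ F.neighborSet u := by
      have := d.adj; rw [hd] at this; exact this
    rw [hset] at hmem
    rcases hmem with h | h | h
    · left; exact SimpleGraph.Dart.ext _ _ (Prod.ext hd h)
    · right; left; exact SimpleGraph.Dart.ext _ _ (Prod.ext hd h)
    · right; right; exact SimpleGraph.Dart.ext _ _ (Prod.ext hd h)

theorem third_dart (hcubic : CubicGraph F) (u : V) (a b : F.Dart)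
    (ha : a.fst = u) (hb : b.fst = u) (hab : a ≠ b) :
    ∃ f : F.Dart, f.fst = u ∧ f ≠ a ∧ f ≠ b ∧
      ∀ d : F.Dart, d.fst = u → d = a ∨ d = b ∨ d = f := by
  obtain ⟨p, q, r, hp, hq, hr, hpq, hpr, hqr, hcov⟩ := three_darts hcubic u
  rcases hcov a ha with h1 | h1 | h1 <;> rcases hcov b hb with h2 | h2 | h2 <;>
    subst h1 <;> subst h2 <;>
    first
      | exact absurd rfl hab
      | (refine ⟨p, hp, ?_, ?_, fun d hd => by rcases hcov d hd with h | h | h <;> tauto⟩ <;>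
          (intro h; subst h; tauto))
      | (refine ⟨q, hq, ?_, ?_, fun d hd => by rcases hcov d hd with h | h | h <;> tauto⟩ <;>
          (intro h; subst h; tauto))
      | (refine ⟨r, hr, ?_, ?_, fun d hd => by rcases hcov d hd with h | h | h <;> tauto⟩ <;>
          (intro h; subst h; tauto))

end Aux

section Chain

variable {V : Type*} {F : SimpleGraph V} {E : Set (Sym2 F.Dart)}

/-- the edge `e` of `F^Δ` is a triangle edge at `v` -/
def TriAt (F : SimpleGraph V) (v : V) (e : Sym2 F.Dart) : Prop :=
  ∃ a b : F.Dart, a.fst = v ∧ b.fst = v ∧ a ≠ b ∧ e = s(a, b)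

theorem notin_E_of_triAt {v : V} (hEv : ∀ e ∈ E, TriAt F v e) {a b : F.Dart}
    (h : a.fst ≠ v ∨ b.fst ≠ v) : s(a, b) ∉ E := by
  intro hmem
  obtain ⟨a', b', ha', hb', hne, heq⟩ := hEv _ hmem
  rcases Sym2.eq_iff.1 heq with ⟨h1, h2⟩ | ⟨h1, h2⟩ <;> subst h1 <;> subst h2 <;> tauto

theorem adj_tri {a b : F.Dart} {v : V} (hEv : ∀ e ∈ E, TriAt F v e)
    (hab : a ≠ b) (hfst : a.fst = b.fst) (hv : a.fst ≠ v) :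
    ((TriangleReplacement F).deleteEdges E).Adj a b := by
  rw [SimpleGraph.deleteEdges_adj]
  exact ⟨show _ ∧ _ from ⟨hab, Or.inl hfst⟩, notin_E_of_triAt hEv (Or.inl hv)⟩

theorem adj_orig {a : F.Dart} {v : V} (hEv : ∀ e ∈ E, TriAt F v e)
    (hv : a.snd ≠ v) :
    ((TriangleReplacement F).deleteEdges E).Adj a a.symm := by
  rw [SimpleGraph.deleteEdges_adj]
  refine ⟨show _ ∧ _ from ⟨(dart_symm_ne a).symm, Or.inr rfl⟩, notin_E_of_triAt hEv (Or.inr ?_)⟩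
  show a.symm.fst ≠ v
  exact hv

theorem chain_s13 (hcubic : CubicGraph F) (v : V) (lv : F.Dart)
    (hEv : ∀ e ∈ E, TriAt F v e)
    (hlvs : lv.snd = v) :
    ∀ (w t : V) (p : F.Walk w t), p.support.Nodup → v ∉ p.support → lv.fst = t →
    ∀ g : F.Dart, g.snd = w → g.fst ∉ p.support → g ≠ lv.symm →
    ∃ P : Set (F.Dart × F.Dart × F.Dart),
      (∀ q ∈ P, ((TriangleReplacement F).deleteEdges E).Adj q.1 q.2.1 ∧
        ((TriangleReplacement F).deleteEdges E).Adj q.2.1 q.2.2 ∧ q.1 ≠ q.2.2) ∧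
      (∀ d, (d = g ∨ d.fst ∈ p.support) → d ≠ lv → ∃! q, q ∈ P ∧ MemT d q) ∧
      (∀ q ∈ P, (q.1 ≠ lv ∧ (q.1 = g ∨ q.1.fst ∈ p.support)) ∧
        (q.2.1 ≠ lv ∧ (q.2.1 = g ∨ q.2.1.fst ∈ p.support)) ∧
        (q.2.2 ≠ lv ∧ (q.2.2 = g ∨ q.2.2.fst ∈ p.support))) := by
  intro w t p
  induction p with
  | nil =>
    rename_i t
    intro _ hvs hlvf g hgsnd hgfst hglv
    simp only [SimpleGraph.Walk.support_nil, List.mem_singleton] at hvs hgfst ⊢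
    have htv : t ≠ v := fun h => hvs h.symm
    have hgsymm_fst : g.symm.fst = t := hgsnd
    have hgsymm_ne_lv : g.symm ≠ lv := by
      intro h
      apply hglv
      rw [← h, SimpleGraph.Dart.symm_symm]
    obtain ⟨f, hf, hfgs, hflv, hcov⟩ := third_dart hcubic t g.symm lv hgsymm_fst hlvf hgsymm_ne_lv
    have hglv' : g ≠ lv := by
      intro h
      have h1 : g.fst = t := by rw [h]; exact hlvf
      exact dart_snd_ne_fst g (hgsnd.trans h1.symm)
    have hgf : g ≠ f := by
      intro h
      have h1 : g.fst = t := by rw [h]; exact hf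
      exact dart_snd_ne_fst g (hgsnd.trans h1.symm)
    refine ⟨{(g, g.symm, f)}, ?_, ?_, ?_⟩
    · rintro q rfl
      refine ⟨adj_orig hEv (hgsnd.trans_ne htv), ?_, hgf⟩
      have hff : g.symm.fst = f.fst := hgsymm_fst.trans hf.symm
      exact adj_tri hEv (fun h => hfgs h.symm) hff (hgsymm_fst.trans_ne htv)
    · intro d hd hdlv
      refine ⟨(g, g.symm, f), ⟨rfl, ?_⟩, ?_⟩
      · rcases hd with rfl | hd
        · exact Or.inl rfl
        · rcases hcov d hd with h | h | h
          · exact Or.inr (Or.inl h)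
          · exact absurd h hdlv
          · exact Or.inr (Or.inr h)
      · rintro q ⟨rfl, _⟩; rfl
    · rintro q rfl
      exact ⟨⟨hglv', Or.inl rfl⟩, ⟨hgsymm_ne_lv, Or.inr hgsymm_fst⟩, ⟨hflv, Or.inr hf⟩⟩
  | cons hadjwc q ih =>
    rename_i w w1 t
    intro hnd hvs hlvf g hgsnd hgfst hglv
    rw [SimpleGraph.Walk.support_cons] at hnd hvs hgfst
    have hw_notin : w ∉ q.support := (List.nodup_cons.1 hnd).1
    have hqnd : q.support.Nodup := (List.nodup_cons.1 hnd).2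
    have hv_q : v ∉ q.support := fun h => hvs (List.mem_cons_of_mem _ h)
    have hwv : w ≠ v := fun h => hvs (h ▸ List.mem_cons_self)
    have htq : t ∈ q.support := SimpleGraph.Walk.end_mem_support q
    have hwt : w ≠ t := fun h => hw_notin (h ▸ htq)
    set e : F.Dart := ⟨(w, w1), hadjwc⟩ with he
    have hes : e.snd = w1 := rfl
    have hef : e.fst = w := rfl
    have helv : e ≠ lv.symm := by
      intro h
      have h2 : e.fst = lv.symm.fst := by rw [h]
      rw [hef] at h2
      exact hwv (h2.trans hlvs)
    obtain ⟨P', hadj', hcov', hsub'⟩ := ih hqnd hv_q hlvf e rfl hw_notin helv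
    have hgsymm_fst : g.symm.fst = w := hgsnd
    have hgsymm_ne_e : g.symm ≠ e := by
      intro h
      have h2 : g.symm.snd = e.snd := by rw [h]
      have h3 : g.fst = w1 := h2
      exact hgfst (by rw [h3]; exact List.mem_cons_of_mem _ (SimpleGraph.Walk.start_mem_support q))
    obtain ⟨f, hf, hfgs, hfe, hcovw⟩ := third_dart hcubic w g.symm e hgsymm_fst hef hgsymm_ne_e
    have hglv' : g ≠ lv := by
      intro h
      exact hgfst (by rw [h, hlvf]; exact List.mem_cons_of_mem _ htq)
    have hgsymm_lv : g.symm ≠ lv := by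
      intro h
      apply hglv
      rw [← h, SimpleGraph.Dart.symm_symm]
    have hflv : f ≠ lv := by
      intro h
      have h2 : f.fst = t := by rw [h]; exact hlvf
      exact hwt (hf.symm.trans h2)
    have helv' : e ≠ lv := by
      intro h
      have h2 : e.fst = t := by rw [h]; exact hlvf
      exact hwt (hef.symm.trans h2)
    have hgf : g ≠ f := by
      intro h
      have h1 : g.fst = w := by rw [h]; exact hf
      exact dart_snd_ne_fst g (hgsnd.trans h1.symm)
    have hg_not : ¬ (g = e ∨ g.fst ∈ q.support) := by
      rintro (h | h)
      · exact hgfst (by rw [h]; exact List.mem_cons_self)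
      · exact hgfst (List.mem_cons_of_mem _ h)
    have hgsymm_not : ¬ (g.symm = e ∨ g.symm.fst ∈ q.support) := by
      rintro (h | h)
      · exact hgsymm_ne_e h
      · rw [hgsymm_fst] at h; exact hw_notin h
    have hf_not : ¬ (f = e ∨ f.fst ∈ q.support) := by
      rintro (h | h)
      · exact hfe h
      · rw [hf] at h; exact hw_notin h
    refine ⟨insert (g, g.symm, f) P', ?_, ?_, ?_⟩
    · intro q' hq'
      rcases Set.mem_insert_iff.1 hq' with rfl | hq'
      · refine ⟨adj_orig hEv (hgsnd.trans_ne hwv), ?_, hgf⟩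
        exact adj_tri hEv (fun h => hfgs h.symm) (hgsymm_fst.trans hf.symm)
          (hgsymm_fst.trans_ne hwv)
      · exact hadj' q' hq'
    · intro d hd hdlv
      by_cases hdnew : d = g ∨ d = g.symm ∨ d = f
      · refine ⟨(g, g.symm, f), ⟨Set.mem_insert _ _, hdnew⟩, ?_⟩
        rintro q' ⟨hq', hmq'⟩
        rcases Set.mem_insert_iff.1 hq' with rfl | hq'
        · rfl
        · exfalso
          obtain ⟨⟨_, h1⟩, ⟨_, h2⟩, ⟨_, h3⟩⟩ := hsub' q' hq'
          have hdS' : d = e ∨ d.fst ∈ q.support := by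
            rcases hmq' with h | h | h
            · rw [h]; exact h1
            · rw [h]; exact h2
            · rw [h]; exact h3
          rcases hdnew with rfl | rfl | rfl
          · exact hg_not hdS'
          · exact hgsymm_not hdS'
          · exact hf_not hdS'
      · push_neg at hdnew
        obtain ⟨hd1, hd2, hd3⟩ := hdnew
        have hd' : d = e ∨ d.fst ∈ q.support := by
          rcases hd with rfl | hd
          · exact absurd rfl hd1
          · rw [SimpleGraph.Walk.support_cons, List.mem_cons] at hd
            rcases hd with hd | hd
            · rcases hcovw d hd with h | h | h
              · exact absurd h hd2
              · exact Or.inl h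
              · exact absurd h hd3
            · exact Or.inr hd
        obtain ⟨q0, ⟨hq0P, hq0m⟩, hq0u⟩ := hcov' d hd' hdlv
        refine ⟨q0, ⟨Set.mem_insert_of_mem _ hq0P, hq0m⟩, ?_⟩
        rintro q' ⟨hq', hmq'⟩
        rcases Set.mem_insert_iff.1 hq' with rfl | hq'
        · exfalso
          rcases hmq' with h | h | h
          · exact hd1 h
          · exact hd2 h
          · exact hd3 h
        · exact hq0u q' ⟨hq', hmq'⟩
    · intro q' hq'
      rcases Set.mem_insert_iff.1 hq' with rfl | hq'
      · exact ⟨⟨hglv', Or.inl rfl⟩,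
          ⟨hgsymm_lv, Or.inr (by rw [hgsymm_fst]; exact List.mem_cons_self)⟩,
          ⟨hflv, Or.inr (by rw [hf]; exact List.mem_cons_self)⟩⟩
      · obtain ⟨⟨h1l, h1⟩, ⟨h2l, h2⟩, ⟨h3l, h3⟩⟩ := hsub' q' hq'
        have lift : ∀ d : F.Dart, (d = e ∨ d.fst ∈ q.support) → (d = g ∨ d.fst ∈ w :: q.support) := by
          rintro d (rfl | h)
          · exact Or.inr (by rw [hef]; exact List.mem_cons_self)
          · exact Or.inr (List.mem_cons_of_mem _ h)
        rw [SimpleGraph.Walk.support_cons]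
        exact ⟨⟨h1l, lift _ h1⟩, ⟨h2l, lift _ h2⟩, ⟨h3l, lift _ h3⟩⟩

end Chain


section Main

variable {V : Type*} {F : SimpleGraph V} {E : Set (Sym2 F.Dart)}

theorem plain_triple (hcubic : CubicGraph F) (u : V)
    (hno2 : ∀ e1 e2, e1 ∈ E → e2 ∈ E → TriAt F u e1 → TriAt F u e2 → e1 = e2) :
    ∃ a b c : F.Dart, a.fst = u ∧ b.fst = u ∧ c.fst = u ∧ a ≠ b ∧ a ≠ c ∧ b ≠ c ∧
      s(a, b) ∉ E ∧ s(b, c) ∉ E ∧ ∀ d : F.Dart, d.fst = u → d = a ∨ d = b ∨ d = c := by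
  obtain ⟨p, q, r, hp, hq, hr, hpq, hpr, hqr, hcov⟩ := three_darts hcubic u
  have d12 : s(p, q) ≠ s(p, r) := by
    intro h
    rcases Sym2.eq_iff.1 h with ⟨_, h'⟩ | ⟨h', _⟩
    · exact hqr h'
    · exact hpr h'
  have d13 : s(p, q) ≠ s(q, r) := by
    intro h
    rcases Sym2.eq_iff.1 h with ⟨h', _⟩ | ⟨h', _⟩
    · exact hpq h'
    · exact hpr h'
  have d23 : s(p, r) ≠ s(q, r) := by
    intro h
    rcases Sym2.eq_iff.1 h with ⟨h', _⟩ | ⟨_, h'⟩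
    · exact hpq h'
    · exact hqr h'.symm
  have tpq : TriAt F u s(p, q) := ⟨p, q, hp, hq, hpq, rfl⟩
  have tpr : TriAt F u s(p, r) := ⟨p, r, hp, hr, hpr, rfl⟩
  have tqr : TriAt F u s(q, r) := ⟨q, r, hq, hr, hqr, rfl⟩
  by_cases h1 : s(p, q) ∈ E
  · have h2 : s(p, r) ∉ E := fun h => d12 (hno2 _ _ h1 h tpq tpr)
    have h3 : s(q, r) ∉ E := fun h => d13 (hno2 _ _ h1 h tpq tqr)
    refine ⟨p, r, q, hp, hr, hq, hpr, hpq, fun h => hqr h.symm, h2,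
      fun hm => h3 (by rwa [Sym2.eq_swap] at hm), fun d hd => ?_⟩
    rcases hcov d hd with h | h | h <;> tauto
  · by_cases h3 : s(q, r) ∈ E
    · have h2 : s(p, r) ∉ E := fun h => d23 (hno2 _ _ h h3 tpr tqr)
      refine ⟨q, p, r, hq, hp, hr, fun h => hpq h.symm, hqr, hpr,
        fun hm => h1 (by rwa [Sym2.eq_swap] at hm), h2, fun d hd => ?_⟩
      rcases hcov d hd with h | h | h <;> tauto
    · exact ⟨p, q, r, hp, hq, hr, hpq, hpr, hqr, h1, h3, hcov⟩

theorem triAt_unique {u u' : V} {e : Sym2 F.Dart} (h1 : TriAt F u e) (h2 : TriAt F u' e) :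
    u = u' := by
  obtain ⟨a, b, ha, hb, hab, rfl⟩ := h1
  obtain ⟨a', b', ha', hb', hab', heq⟩ := h2
  rcases Sym2.eq_iff.1 heq with ⟨h, _⟩ | ⟨h, _⟩
  · rw [← ha, h, ha']
  · rw [← ha, h, hb']

end Main

/-- for `G = F^Δ` with `F` cubic and 2-connected, deleting any two
edges of `G` leaves a graph with a `Λ`-factor. -/
theorem stmt_13 {V : Type*} [Fintype V] (F : SimpleGraph V)
    (hcubic : CubicGraph F) (hconn : KConnected 2 F)
    (E : Set (Sym2 F.Dart)) (hE : E ⊆ (TriangleReplacement F).edgeSet)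
    (hcard : E.ncard = 2) :
    HasLambdaFactor ((TriangleReplacement F).deleteEdges E) := by
  classical
  obtain ⟨ε1, ε2, hne, hEeq⟩ := Set.ncard_eq_two.1 hcard
  by_cases hhard : ∃ v, TriAt F v ε1 ∧ TriAt F v ε2
  · -- HARD CASE: both deleted edges are triangle edges at the same vertex v
    obtain ⟨v, ht1, ht2⟩ := hhard
    have hEv : ∀ e ∈ E, TriAt F v e := by
      intro e he
      rw [hEeq] at he
      rcases he with rfl | rfl
      · exact ht1
      · exact ht2
    obtain ⟨x, y, z, hx, hy, hz, hxyne, hxz, hyz, hxyE, hcovv⟩ :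
        ∃ x y z : F.Dart, x.fst = v ∧ y.fst = v ∧ z.fst = v ∧ x ≠ y ∧ x ≠ z ∧ y ≠ z ∧
          s(x, y) ∉ E ∧ ∀ d : F.Dart, d.fst = v → d = x ∨ d = y ∨ d = z := by
      obtain ⟨p, q, r, hp, hq, hr, hpq, hpr, hqr, hcov⟩ := three_darts hcubic v
      have d12 : s(p, q) ≠ s(p, r) := by
        intro h
        rcases Sym2.eq_iff.1 h with ⟨_, h'⟩ | ⟨h', _⟩
        · exact hqr h'
        · exact hpr h'
      have d13 : s(p, q) ≠ s(q, r) := by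
        intro h
        rcases Sym2.eq_iff.1 h with ⟨h', _⟩ | ⟨h', _⟩
        · exact hpq h'
        · exact hpr h'
      have d23 : s(p, r) ≠ s(q, r) := by
        intro h
        rcases Sym2.eq_iff.1 h with ⟨h', _⟩ | ⟨_, h'⟩
        · exact hpq h'
        · exact hqr h'.symm
      by_cases h1 : s(p, q) ∈ E
      · by_cases h2 : s(p, r) ∈ E
        · have h3 : s(q, r) ∉ E := by
            intro h3
            rw [hEeq] at h1 h2 h3
            rcases h1 with h1 | h1 <;> rcases h2 with h2 | h2 <;> rcases h3 with h3 | h3 <;>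
              first
                | exact d12 (h1.trans h2.symm)
                | exact d13 (h1.trans h3.symm)
                | exact d23 (h2.trans h3.symm)
          exact ⟨q, r, p, hq, hr, hp, hqr, fun h => hpq h.symm, fun h => hpr h.symm, h3,
            fun d hd => by rcases hcov d hd with h | h | h <;> tauto⟩
        · exact ⟨p, r, q, hp, hr, hq, hpr, hpq, fun h => hqr h.symm, h2,
            fun d hd => by rcases hcov d hd with h | h | h <;> tauto⟩
      · exact ⟨p, q, r, hp, hq, hr, hpq, hpr, hqr, h1, hcov⟩
    have hzsv : z.snd ≠ v := fun h => dart_snd_ne_fst z (h.trans hz.symm)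
    have hxsv : x.snd ≠ v := fun h => dart_snd_ne_fst x (h.trans hx.symm)
    have hcon : (SimpleGraph.induce ({v}ᶜ : Set V) F).Connected := by
      apply hconn.2
      rw [Set.ncard_singleton]
      norm_num
    obtain ⟨pw⟩ := hcon.preconnected ⟨z.snd, hzsv⟩ ⟨x.snd, hxsv⟩
    set pw2 : F.Walk z.snd x.snd :=
      pw.map (SimpleGraph.Embedding.induce ({v}ᶜ : Set V)).toHom with hpw2
    have hvpw2 : v ∉ pw2.support := by
      intro h
      replace h := (congrArg (v ∈ ·) (SimpleGraph.Walk.support_map (SimpleGraph.Embedding.induce ({v}ᶜ : Set V)).toHom pw)).mp h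
      rw [List.mem_map] at h
      obtain ⟨s, _, hs⟩ := h
      exact s.2 hs
    set p3 : F.Walk z.snd x.snd := (pw2.toPath : F.Walk z.snd x.snd) with hp3
    have hnd : p3.support.Nodup := pw2.toPath.isPath.support_nodup
    have hvp3 : v ∉ p3.support := fun h => hvpw2 (SimpleGraph.Walk.support_toPath_subset pw2 h)
    have hzfst : z.fst ∉ p3.support := by rw [hz]; exact hvp3
    have hzne : z ≠ x.symm.symm := by
      rw [SimpleGraph.Dart.symm_symm]; exact hxz.symm
    obtain ⟨Pc, hadjc, hcovc, hsubc⟩ :=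
      chain_s13 hcubic v x.symm hEv (show x.symm.snd = v from hx) z.snd x.snd p3 hnd hvp3
        (show x.symm.fst = x.snd from rfl) z rfl hzfst hzne
    choose pa pb pc hpa hpb hpc hab hac hbc hpcov using three_darts hcubic
    have hxsupp : x.snd ∈ p3.support := SimpleGraph.Walk.end_mem_support p3
    refine assemble _ (ι := Option V)
      (fun i => match i with
        | none => {d | (d = z ∨ d.fst ∈ p3.support) ∧ d ≠ x.symm}
        | some u => if u = v then {x, y, x.symm} else
            if u ∈ p3.support then (∅ : Set F.Dart) else {d | d.fst = u})
      (fun i => match i with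
        | none => Pc
        | some u => if u = v then {(y, x, x.symm)} else
            if u ∈ p3.support then ∅ else {(pa u, pb u, pc u)})
      ?_ ?_ ?_ ?_
    · -- hpart
      intro d
      by_cases hA : d = x ∨ d = y ∨ d = x.symm
      · refine ⟨some v, ?_, ?_⟩
        · dsimp only
          rw [if_pos rfl]
          rcases hA with rfl | rfl | rfl
          · exact Or.inl rfl
          · exact Or.inr (Or.inl rfl)
          · exact Or.inr (Or.inr rfl)
        · intro i hi
          rcases i with _ | u <;> dsimp only at hi
          · exfalso
            obtain ⟨h1, h2⟩ := hi
            rcases hA with rfl | rfl | rfl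
            · rcases h1 with h | h
              · exact hxz h
              · rw [hx] at h; exact hvp3 h
            · rcases h1 with h | h
              · exact hyz h
              · rw [hy] at h; exact hvp3 h
            · exact h2 rfl
          · by_cases huv : u = v
            · rw [huv]
            · exfalso
              rw [if_neg huv] at hi
              by_cases hus : u ∈ p3.support
              · rw [if_pos hus] at hi; exact hi
              · rw [if_neg hus] at hi
                have hi' : d.fst = u := hi
                rcases hA with rfl | rfl | rfl
                · exact huv (hi'.symm.trans hx)
                · exact huv (hi'.symm.trans hy)
                · exact hus (by rw [← hi']; exact hxsupp)
      · by_cases hB : d = z ∨ d.fst ∈ p3.support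
        · refine ⟨none, ⟨hB, fun h => hA (Or.inr (Or.inr h))⟩, ?_⟩
          intro i hi
          rcases i with _ | u <;> dsimp only at hi
          · rfl
          · exfalso
            by_cases huv : u = v
            · rw [if_pos huv] at hi
              simp only [Set.mem_insert_iff, Set.mem_singleton_iff] at hi
              exact hA hi
            · rw [if_neg huv] at hi
              by_cases hus : u ∈ p3.support
              · rw [if_pos hus] at hi; exact hi
              · rw [if_neg hus] at hi
                have hi' : d.fst = u := hi
                rcases hB with rfl | h
                · exact huv (hi'.symm.trans hz)
                · exact hus (hi' ▸ h)
        · have hdv : d.fst ≠ v := by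
            intro h
            rcases hcovv d h with rfl | rfl | rfl
            · exact hA (Or.inl rfl)
            · exact hA (Or.inr (Or.inl rfl))
            · exact hB (Or.inl rfl)
          have hds : d.fst ∉ p3.support := fun h => hB (Or.inr h)
          refine ⟨some d.fst, ?_, ?_⟩
          · dsimp only
            rw [if_neg hdv, if_neg hds]
            exact rfl
          · intro i hi
            rcases i with _ | u <;> dsimp only at hi
            · exact absurd hi.1 hB
            · by_cases huv : u = v
              · exfalso
                rw [if_pos huv] at hi
                simp only [Set.mem_insert_iff, Set.mem_singleton_iff] at hi
                exact hA hi
              · rw [if_neg huv] at hi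
                by_cases hus : u ∈ p3.support
                · rw [if_pos hus] at hi; exact absurd hi (Set.notMem_empty d)
                · rw [if_neg hus] at hi
                  have hi' : d.fst = u := hi
                  rw [hi']
    · -- hadj
      intro i
      rcases i with _ | u <;> dsimp only
      · exact hadjc
      · by_cases huv : u = v
        · simp only [if_pos huv]
          rintro q hq
          have hq' : q = (y, x, x.symm) := hq
          subst hq'
          refine ⟨?_, adj_orig hEv hxsv, ?_⟩
          · rw [SimpleGraph.deleteEdges_adj]
            refine ⟨show _ ∧ _ from ⟨hxyne.symm, Or.inl (hy.trans hx.symm)⟩, ?_⟩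
            intro h
            exact hxyE (by rwa [Sym2.eq_swap] at h)
          · intro h
            exact hxsv (hy.symm.trans (congrArg (fun d : F.Dart => d.fst) h)).symm
        · simp only [if_neg huv]
          by_cases hus : u ∈ p3.support
          · simp only [if_pos hus]; rintro q hq; exact absurd hq (Set.notMem_empty q)
          · simp only [if_neg hus]
            rintro q hq
            have hq' : q = (pa u, pb u, pc u) := hq
            subst hq'
            have huv2 : (pa u).fst ≠ v := by rw [hpa u]; exact huv
            have huv3 : (pb u).fst ≠ v := by rw [hpb u]; exact huv
            exact ⟨adj_tri hEv (hab u) ((hpa u).trans (hpb u).symm) huv2,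
              adj_tri hEv (hbc u) ((hpb u).trans (hpc u).symm) huv3, hac u⟩
    · -- hcov
      intro i
      rcases i with _ | u <;> dsimp only
      · rintro d ⟨h1, h2⟩
        exact hcovc d h1 h2
      · by_cases huv : u = v
        · simp only [if_pos huv]
          intro d hd
          simp only [Set.mem_insert_iff, Set.mem_singleton_iff] at hd
          refine ⟨(y, x, x.symm), ⟨rfl, ?_⟩, ?_⟩
          · rcases hd with rfl | rfl | rfl
            · exact Or.inr (Or.inl rfl)
            · exact Or.inl rfl
            · exact Or.inr (Or.inr rfl)
          · rintro q' ⟨hq', _⟩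
            exact hq'
        · simp only [if_neg huv]
          by_cases hus : u ∈ p3.support
          · simp only [if_pos hus]; intro d hd; exact absurd hd (Set.notMem_empty d)
          · simp only [if_neg hus]
            intro d hd
            refine ⟨(pa u, pb u, pc u), ⟨rfl, hpcov u d hd⟩, ?_⟩
            rintro q' ⟨hq', _⟩
            exact hq'
    · -- hsub
      intro i
      rcases i with _ | u <;> dsimp only
      · intro q hq
        obtain ⟨⟨h1l, h1⟩, ⟨h2l, h2⟩, ⟨h3l, h3⟩⟩ := hsubc q hq
        exact ⟨⟨h1, h1l⟩, ⟨h2, h2l⟩, ⟨h3, h3l⟩⟩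
      · by_cases huv : u = v
        · simp only [if_pos huv]
          rintro q hq
          have hq' : q = (y, x, x.symm) := hq
          subst hq'
          exact ⟨Or.inr (Or.inl rfl), Or.inl rfl, Or.inr (Or.inr rfl)⟩
        · simp only [if_neg huv]
          by_cases hus : u ∈ p3.support
          · simp only [if_pos hus]; rintro q hq; exact absurd hq (Set.notMem_empty q)
          · simp only [if_neg hus]
            rintro q hq
            have hq' : q = (pa u, pb u, pc u) := hq
            subst hq'
            exact ⟨hpa u, hpb u, hpc u⟩
  · -- EASY CASE: no vertex has both deleted edges as its triangle edges
    have hno2 : ∀ u, ∀ e1 e2, e1 ∈ E → e2 ∈ E → TriAt F u e1 → TriAt F u e2 → e1 = e2 := by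
      intro u e1 e2 he1 he2 t1 t2
      rw [hEeq] at he1 he2
      simp only [Set.mem_insert_iff, Set.mem_singleton_iff] at he1 he2
      rcases he1 with rfl | rfl <;> rcases he2 with rfl | rfl
      · rfl
      · exact absurd ⟨u, t1, t2⟩ hhard
      · exact absurd ⟨u, t2, t1⟩ hhard
      · rfl
    choose a b c ha hb hc hab hac hbc hE1 hE2 hcov using fun u => plain_triple hcubic u (hno2 u)
    refine assemble _ (ι := V) (fun u => {d | d.fst = u}) (fun u => {(a u, b u, c u)})
      ?_ ?_ ?_ ?_
    · intro d
      exact ⟨d.fst, rfl, fun u hu => hu.symm⟩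
    · rintro u q hq
      have hq' : q = (a u, b u, c u) := hq
      subst hq'
      refine ⟨?_, ?_, hac u⟩
      · rw [SimpleGraph.deleteEdges_adj]
        exact ⟨show _ ∧ _ from ⟨hab u, Or.inl ((ha u).trans (hb u).symm)⟩, hE1 u⟩
      · rw [SimpleGraph.deleteEdges_adj]
        exact ⟨show _ ∧ _ from ⟨hbc u, Or.inl ((hb u).trans (hc u).symm)⟩, hE2 u⟩
    · intro u d hd
      refine ⟨(a u, b u, c u), ⟨rfl, hcov u d hd⟩, ?_⟩
      rintro q' ⟨hq', _⟩
      exact hq'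
    · rintro u q hq
      have hq' : q = (a u, b u, c u) := hq
      subst hq'
      exact ⟨ha u, hb u, hc u⟩
end

section
/- Let G be a 3-connected graph and let xy be an edge of G. Then there exist two distinct vertices z1 and z2, each adjacent to y and distinct from x, such that for each i ∈ {1,2}, letting L_i be the 3-vertex path with vertices x, y, z_i and edges xy and yz_i, the graph G − L_i (obtained by deleting the three vertices of L_i and all incident edges) is connected. -/
open SimpleGraph

section Aux
variable {V : Type*} {G : SimpleGraph V}

def ReachIn (G : SimpleGraph V) (B : Set V) (u v : V) : Prop :=
  ∃ (hu : u ∈ B) (hv : v ∈ B), (G.induce B).Reachable ⟨u, hu⟩ ⟨v, hv⟩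

lemma ReachIn.mem_left {B : Set V} {u v : V} (h : ReachIn G B u v) : u ∈ B := h.1
lemma ReachIn.mem_right {B : Set V} {u v : V} (h : ReachIn G B u v) : v ∈ B := h.2.1

lemma reachIn_refl {B : Set V} {u : V} (hu : u ∈ B) : ReachIn G B u u :=
  ⟨hu, hu, Reachable.refl _⟩

lemma ReachIn.symm {B : Set V} {u v : V} (h : ReachIn G B u v) : ReachIn G B v u :=
  ⟨h.2.1, h.1, h.2.2.symm⟩

lemma ReachIn.trans {B : Set V} {u v t : V} (h : ReachIn G B u v) (h' : ReachIn G B v t) :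
    ReachIn G B u t :=
  ⟨h.1, h'.2.1, h.2.2.trans h'.2.2⟩

lemma reachIn_adj {B : Set V} {u v : V} (hu : u ∈ B) (hv : v ∈ B) (h : G.Adj u v) :
    ReachIn G B u v :=
  ⟨hu, hv, Adj.reachable (by exact h)⟩

lemma walk_stay {B C : Set V}
    (hcl : ∀ q ∈ C, ∀ p ∈ B, G.Adj q p → p ∈ C) :
    ∀ {a b : B} (_ : (G.induce B).Walk a b), (a : V) ∈ C → (b : V) ∈ C := by
  intro a b w
  induction w with
  | nil => exact id
  | cons h p ih =>
    intro ha
    exact ih (hcl _ ha _ (Subtype.mem _) (by exact h))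

lemma reachIn_mono_aux {B B' : Set V} :
    ∀ {a b : B} (_ : (G.induce B).Walk a b),
      (∀ t, ReachIn G B (a : V) t → t ∈ B') → ReachIn G B' (a : V) (b : V) := by
  intro a b w
  induction w with
  | nil => exact fun hB => reachIn_refl (hB _ (reachIn_refl (Subtype.mem _)))
  | @cons a s b h p ih =>
    intro hB
    have hs : ReachIn G B (a : V) (s : V) := reachIn_adj (Subtype.mem _) (Subtype.mem _) (by exact h)
    have h1 : ReachIn G B' (a : V) (s : V) :=
      reachIn_adj (hB _ (reachIn_refl (Subtype.mem _))) (hB _ hs) (by exact h)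
    exact h1.trans (ih fun t ht => hB t (hs.trans ht))

lemma ReachIn.mono {B B' : Set V} {u v : V} (h : ReachIn G B u v)
    (hB : ∀ t, ReachIn G B u t → t ∈ B') : ReachIn G B' u v := by
  obtain ⟨hu, hv, ⟨w⟩⟩ := h
  exact reachIn_mono_aux w hB

lemma exists_nbr_outside {B : Set V} (hpre : (G.induce B).Preconnected)
    (C : Set V) {u v : V} (hu : u ∈ B) (hv : v ∈ B) (huC : u ∈ C) (hvC : v ∉ C) :
    ∃ q ∈ C, ∃ p ∈ B, p ∉ C ∧ G.Adj q p := by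
  obtain ⟨w⟩ := hpre ⟨u, hu⟩ ⟨v, hv⟩
  obtain ⟨d, _, hd1, hd2⟩ := w.exists_boundary_dart {s : B | (s : V) ∈ C} huC hvC
  exact ⟨(d.fst : V), hd1, (d.snd : V), Subtype.mem _, hd2, by exact d.adj⟩

lemma exists_adj_of_reachable {W : Type*} {H : SimpleGraph W} {a b : W}
    (h : H.Reachable a b) (hne : a ≠ b) : ∃ c, H.Adj a c := by
  obtain ⟨w⟩ := h
  cases w with
  | nil => exact absurd rfl hne
  | cons h _ => exact ⟨_, h⟩

end Aux

section Main
variable {V : Type*} [Fintype V] {G : SimpleGraph V}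

lemma mem_triple_compl {x y z v : V} :
    v ∈ ({x, y, z}ᶜ : Set V) ↔ v ≠ x ∧ v ≠ y ∧ v ≠ z := by
  simp [not_or]

lemma mem_pair_compl {x y v : V} :
    v ∈ ({x, y}ᶜ : Set V) ↔ v ≠ x ∧ v ≠ y := by
  simp [not_or]

lemma ncard_pair_lt_three (x y : V) : ({x, y} : Set V).ncard < 3 := by
  have h1 := Set.ncard_insert_le x ({y} : Set V)
  have h2 : ({y} : Set V).ncard = 1 := Set.ncard_singleton y
  omega

lemma two_nbrs (hconn : KConnected 3 G) {x y : V} (hxy : G.Adj x y) :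
    ∃ z₁ z₂ : V, z₁ ≠ z₂ ∧ z₁ ≠ x ∧ z₂ ≠ x ∧ G.Adj y z₁ ∧ G.Adj y z₂ := by
  have hcard : 3 < Nat.card V := hconn.1
  have hdeg : 3 ≤ (G.neighborSet y).ncard := by
    by_contra hlt
    push_neg at hlt
    have hc := hconn.2 (G.neighborSet y) hlt
    have hy : y ∈ (G.neighborSet y)ᶜ := by
      simp [Set.mem_compl_iff, SimpleGraph.mem_neighborSet]
    have hcompl : 1 < ((G.neighborSet y)ᶜ : Set V).ncard := by
      have := Set.ncard_add_ncard_compl (G.neighborSet y)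
      omega
    obtain ⟨v, hv, hvy⟩ := Set.exists_ne_of_one_lt_ncard hcompl y
    obtain ⟨c, hcadj⟩ := exists_adj_of_reachable
      (hc.preconnected ⟨y, hy⟩ ⟨v, hv⟩) (by simp [Subtype.ext_iff, hvy.symm])
    have : (c : V) ∈ G.neighborSet y := by exact hcadj
    exact c.2 this
  have hx : x ∈ G.neighborSet y := hxy.symm
  have hdiff : 1 < (G.neighborSet y \ {x}).ncard := by
    have := Set.ncard_diff_singleton_of_mem hx
    omega
  have hne : (G.neighborSet y \ {x}).Nonempty := by
    rw [← Set.ncard_pos]; omega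
  obtain ⟨z₁, hz₁⟩ := hne
  obtain ⟨z₂, hz₂, hz₂₁⟩ := Set.exists_ne_of_one_lt_ncard hdiff z₁
  exact ⟨z₁, z₂, hz₂₁.symm, hz₁.2, hz₂.2, hz₁.1, hz₂.1⟩

lemma key (hconn : KConnected 3 G) {x y : V} (hxy : G.Adj x y) :
    ∀ (n : ℕ) (z u w : V), G.Adj y z → z ≠ x → u ∈ ({x, y, z}ᶜ : Set V) →
      w ∉ {t | ReachIn G ({x, y, z}ᶜ : Set V) u t} →
      (∃ v₀ ∈ ({x, y, z}ᶜ : Set V), v₀ ∉ {t | ReachIn G ({x, y, z}ᶜ : Set V) u t}) →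
      ({t | ReachIn G ({x, y, z}ᶜ : Set V) u t}).ncard ≤ n →
      ∃ z', G.Adj y z' ∧ z' ≠ x ∧ z' ≠ w ∧ (G.induce ({x, y, z'}ᶜ : Set V)).Connected := by
  intro n
  induction n with
  | zero =>
    intro z u w hyz hzx hu hw hv hn
    exfalso
    have huC : u ∈ {t | ReachIn G ({x, y, z}ᶜ : Set V) u t} := reachIn_refl hu
    have : ({t | ReachIn G ({x, y, z}ᶜ : Set V) u t}).ncard = 0 := by omega
    rw [Set.ncard_eq_zero (Set.toFinite _)] at this
    rw [this] at huC
    exact huC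
  | succ n ih =>
    intro z u w hyz hzx hu hw hv hn
    set Bz : Set V := ({x, y, z}ᶜ : Set V) with hBz
    set C : Set V := {t | ReachIn G Bz u t} with hC
    have hCcl : ∀ q ∈ C, ∀ p ∈ Bz, G.Adj q p → p ∈ C := by
      intro q hq p hp hadj
      exact ReachIn.trans hq (reachIn_adj (ReachIn.mem_right hq) hp hadj)
    have hCsub : C ⊆ Bz := fun t ht => ReachIn.mem_right ht
    obtain ⟨v₀, hv₀B, hv₀C⟩ := hv
    -- step (a): find z' ∈ C adjacent to y
    have hpre2 : (G.induce ({x, z}ᶜ : Set V)).Preconnected :=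
      (hconn.2 {x, z} (ncard_pair_lt_three x z)).preconnected
    have huB2 : u ∈ ({x, z}ᶜ : Set V) := by
      rw [mem_pair_compl]
      rw [mem_triple_compl] at hu
      exact ⟨hu.1, hu.2.2⟩
    have hv₀B2 : v₀ ∈ ({x, z}ᶜ : Set V) := by
      rw [mem_pair_compl]
      rw [mem_triple_compl] at hv₀B
      exact ⟨hv₀B.1, hv₀B.2.2⟩
    obtain ⟨z', hz'C, p, hpB2, hpC, hadj⟩ :=
      exists_nbr_outside hpre2 C huB2 hv₀B2 (reachIn_refl hu) hv₀C
    rw [mem_pair_compl] at hpB2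
    have hpy : p = y := by
      by_contra hpy
      have hpB : p ∈ Bz := by rw [mem_triple_compl]; exact ⟨hpB2.1, hpy, hpB2.2⟩
      exact hpC (hCcl _ hz'C _ hpB hadj)
    rw [hpy] at hadj
    have hz'B : z' ∈ Bz := hCsub hz'C
    have hz'm := (mem_triple_compl).1 hz'B
    have hyz' : G.Adj y z' := hadj.symm
    have hz'w : z' ≠ w := fun h => hw (h ▸ hz'C)
    by_cases hcon : (G.induce ({x, y, z'}ᶜ : Set V)).Connected
    · exact ⟨z', hyz', hz'm.1, hz'w, hcon⟩
    · set Bz' : Set V := ({x, y, z'}ᶜ : Set V) with hBz'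
      have hzB' : z ∈ Bz' := by
        rw [mem_triple_compl]
        exact ⟨hzx, fun h => G.irrefl (h ▸ hyz), fun h => hz'm.2.2 h.symm⟩
      -- Bz' is disconnected; find a base point a' not reaching z
      have hnpre : ¬ (G.induce Bz').Preconnected := by
        intro hp
        exact hcon ((SimpleGraph.connected_iff _).mpr ⟨hp, ⟨⟨z, hzB'⟩⟩⟩)
      rw [SimpleGraph.Preconnected] at hnpre
      push_neg at hnpre
      obtain ⟨a, b, hab⟩ := hnpre
      have habR : ¬ ReachIn G Bz' (a : V) (b : V) := by
        rintro ⟨_, _, r⟩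
        exact hab r
      have hpick : ∃ a' : V, a' ∈ Bz' ∧ ¬ ReachIn G Bz' a' z := by
        by_cases haz : ReachIn G Bz' (a : V) z
        · refine ⟨(b : V), Subtype.mem _, fun hbz => habR (haz.trans hbz.symm)⟩
        · exact ⟨(a : V), Subtype.mem _, haz⟩
      obtain ⟨a', ha'B, ha'z⟩ := hpick
      -- claim : a' ∈ C
      have ha'C : a' ∈ C := by
        by_contra ha'C
        have ha'm := (mem_triple_compl).1 ha'B
        have ha'nz : a' ≠ z := fun h => ha'z (by rw [h]; exact reachIn_refl hzB')
        have ha'Bz : a' ∈ Bz := by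
          rw [mem_triple_compl]; exact ⟨ha'm.1, ha'm.2.1, ha'nz⟩
        set C'' : Set V := {t | ReachIn G Bz a' t} with hC''
        have hC''cl : ∀ q ∈ C'', ∀ p ∈ Bz, G.Adj q p → p ∈ C'' := by
          intro q hq p hp hadj
          exact ReachIn.trans hq (reachIn_adj (ReachIn.mem_right hq) hp hadj)
        have hz'C'' : z' ∉ C'' := by
          intro hz'
          exact ha'C (hz'C.trans hz'.symm)
        have hpreA : (G.induce ({x, y}ᶜ : Set V)).Preconnected :=
          (hconn.2 {x, y} (ncard_pair_lt_three x y)).preconnected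
        have ha'A : a' ∈ ({x, y}ᶜ : Set V) := by
          rw [mem_pair_compl]; exact ⟨ha'm.1, ha'm.2.1⟩
        have hzA : z ∈ ({x, y}ᶜ : Set V) := by
          rw [mem_pair_compl]
          exact ⟨hzx, fun h => G.irrefl (h ▸ hyz)⟩
        have hzC'' : z ∉ C'' := fun h => (mem_triple_compl.1 (ReachIn.mem_right h)).2.2 rfl
        obtain ⟨q₂, hq₂C, p₂, hp₂A, hp₂C, hadj₂⟩ :=
          exists_nbr_outside hpreA C'' ha'A hzA (reachIn_refl ha'Bz) hzC''
        rw [mem_pair_compl] at hp₂A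
        have hp₂z : p₂ = z := by
          by_contra hne
          have : p₂ ∈ Bz := by rw [mem_triple_compl]; exact ⟨hp₂A.1, hp₂A.2, hne⟩
          exact hp₂C (hC''cl _ hq₂C _ this hadj₂)
        rw [hp₂z] at hadj₂
        -- transfer the reach a' → q₂ from Bz to Bz'
        have hreach : ReachIn G Bz' a' q₂ := by
          refine ReachIn.mono hq₂C ?_
          intro t ht
          have htm := (mem_triple_compl).1 (ReachIn.mem_right ht)
          rw [mem_triple_compl]
          refine ⟨htm.1, htm.2.1, ?_⟩
          intro h
          exact hz'C'' (h ▸ ht)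
        have hq₂B' : q₂ ∈ Bz' := ReachIn.mem_right hreach
        exact ha'z (hreach.trans (reachIn_adj hq₂B' hzB' hadj₂))
      -- D := component of a' in Bz'
      set D : Set V := {t | ReachIn G Bz' a' t} with hD
      have hDcl : ∀ q ∈ D, ∀ p ∈ Bz', G.Adj q p → p ∈ D := by
        intro q hq p hp hadj
        exact ReachIn.trans hq (reachIn_adj (ReachIn.mem_right hq) hp hadj)
      have hzD : z ∉ D := ha'z
      have hDC : ∀ d ∈ D, d ∈ C := by
        intro d hd
        obtain ⟨ha'B', hdB', ⟨wlk⟩⟩ := hd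
        have hcl2 : ∀ q ∈ C ∩ D, ∀ p ∈ Bz', G.Adj q p → p ∈ C ∩ D := by
          intro q hq p hp hadj
          have hpD : p ∈ D := hDcl _ hq.2 _ hp hadj
          have hpz : p ≠ z := fun h => hzD (h ▸ hpD)
          have hpm := (mem_triple_compl).1 hp
          have hpBz : p ∈ Bz := by rw [mem_triple_compl]; exact ⟨hpm.1, hpm.2.1, hpz⟩
          exact ⟨hCcl _ hq.1 _ hpBz hadj, hpD⟩
        exact (walk_stay hcl2 wlk ⟨ha'C, reachIn_refl ha'B⟩).1
      have hz'D : z' ∉ D := fun h => (mem_triple_compl.1 (ReachIn.mem_right h)).2.2 rfl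
      have hDss : D ⊂ C := by
        constructor
        · exact fun t ht => hDC t ht
        · intro hsub
          exact hz'D (hsub hz'C)
      have hncard : D.ncard ≤ n := by
        have := Set.ncard_lt_ncard hDss (Set.toFinite C)
        omega
      exact ih z' a' w hyz' hz'm.1 ha'B (fun h => hw (hDC w h)) ⟨z, hzB', hzD⟩ hncard

end Main

/-- if `G` is a 3-connected graph and `xy` an edge of `G`, then there
are two distinct neighbors `z₁, z₂` of `y`, both distinct from `x`, such that for the
3-vertex paths `Lᵢ = x-y-zᵢ` each `G − Lᵢ` is connected. -/
theorem stmt_19 {V : Type*} [Fintype V] (G : SimpleGraph V)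
    (hconn : KConnected 3 G) (x y : V) (hxy : G.Adj x y) :
    ∃ z₁ z₂ : V, z₁ ≠ z₂ ∧ z₁ ≠ x ∧ z₂ ≠ x ∧ G.Adj y z₁ ∧ G.Adj y z₂ ∧
      (G.induce ({x, y, z₁}ᶜ : Set V)).Connected ∧
      (G.induce ({x, y, z₂}ᶜ : Set V)).Connected := by
  have lemC : ∀ w : V, ∃ z', G.Adj y z' ∧ z' ≠ x ∧ z' ≠ w ∧
      (G.induce ({x, y, z'}ᶜ : Set V)).Connected := by
    intro w
    obtain ⟨t₁, t₂, ht12, ht1x, ht2x, hat1, hat2⟩ := two_nbrs hconn hxy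
    obtain ⟨z₀, hz₀a, hz₀x, hz₀w⟩ : ∃ z₀, G.Adj y z₀ ∧ z₀ ≠ x ∧ z₀ ≠ w := by
      by_cases h : t₁ = w
      · exact ⟨t₂, hat2, ht2x, fun hh => ht12 (h.trans hh.symm)⟩
      · exact ⟨t₁, hat1, ht1x, h⟩
    by_cases hcon : (G.induce ({x, y, z₀}ᶜ : Set V)).Connected
    · exact ⟨z₀, hz₀a, hz₀x, hz₀w, hcon⟩
    · have hBne : ({x, y, z₀}ᶜ : Set V).Nonempty := by
        rw [← Set.ncard_pos]
        have h1 := Set.ncard_add_ncard_compl ({x, y, z₀} : Set V)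
        have h2 : ({x, y, z₀} : Set V).ncard ≤ 3 := by
          have ha := Set.ncard_insert_le x ({y, z₀} : Set V)
          have hb := Set.ncard_insert_le y ({z₀} : Set V)
          have hc : ({z₀} : Set V).ncard = 1 := Set.ncard_singleton z₀
          omega
        have h3 := hconn.1
        omega
      set Bz : Set V := ({x, y, z₀}ᶜ : Set V) with hBz
      have hnpre : ¬ (G.induce Bz).Preconnected := by
        intro hp
        exact hcon ((SimpleGraph.connected_iff _).mpr ⟨hp, ⟨⟨hBne.choose, hBne.choose_spec⟩⟩⟩)
      rw [SimpleGraph.Preconnected] at hnpre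
      push_neg at hnpre
      obtain ⟨a, b, hab⟩ := hnpre
      have habR : ¬ ReachIn G Bz (a : V) (b : V) := by
        rintro ⟨_, _, r⟩
        exact hab r
      by_cases hwa : w ∈ {t | ReachIn G Bz (a : V) t}
      · -- use component of b
        have hwb : w ∉ {t | ReachIn G Bz (b : V) t} := by
          intro hwb
          exact habR (ReachIn.trans hwa hwb.symm)
        have haC : (a : V) ∉ {t | ReachIn G Bz (b : V) t} := fun h => habR h.symm
        exact key hconn hxy _ z₀ (b : V) w hz₀a hz₀x (Subtype.mem _) hwb
          ⟨(a : V), Subtype.mem _, haC⟩ le_rfl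
      · have hbC : (b : V) ∉ {t | ReachIn G Bz (a : V) t} := habR
        exact key hconn hxy _ z₀ (a : V) w hz₀a hz₀x (Subtype.mem _) hwa
          ⟨(b : V), Subtype.mem _, hbC⟩ le_rfl
  obtain ⟨z₁, h1, h1x, _, hc1⟩ := lemC x
  obtain ⟨z₂, h2, h2x, h21, hc2⟩ := lemC z₁
  exact ⟨z₁, z₂, (Ne.symm h21), h1x, h2x, h1, h2, hc1, hc2⟩
end
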